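/- arXiv:0809.2167 — 9 statements merged into one kernel-verified Lean document; each statement's English description precedes it below -/
import Mathlib

section
/- Let Y₀ > 0 and M > 0, and let Ψ be holomorphic on H = {W ∈ ℂ : Im W < −Y₀}, commuting with T₁ (Ψ(W+1) = Ψ(W)+1), with |Ψ(W) − W| ≤ M for all W ∈ H. Then the image Ψ(H) contains the half-plane {W ∈ ℂ : Im W < −(Y₀ + M + 1)}. -/
open Filter Complex

/-- The image of a lower half-plane under a near-identity map commuting with `T₁`
contains a lower half-plane. -/
theorem stmt_4 (Y₀ M : ℝ) (hY₀ : 0 < Y₀) (hM : 0 < M) (Ψ : ℂ → ℂ)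
    (hhol : DifferentiableOn ℂ Ψ {W : ℂ | W.im < -Y₀})
    (hcomm : ∀ W : ℂ, W.im < -Y₀ → Ψ (W + 1) = Ψ W + 1)
    (hbdd : ∀ W : ℂ, W.im < -Y₀ → ‖Ψ W - W‖ ≤ M) :
    {w : ℂ | w.im < -(Y₀ + M + 1)} ⊆ Ψ '' {W : ℂ | W.im < -Y₀} := by
  set H : Set ℂ := {W : ℂ | W.im < -Y₀} with hH
  set P : Set ℂ := {w : ℂ | w.im < -(Y₀ + M + 1)} with hP
  have hHopen : IsOpen H := by
    have : H = Complex.im ⁻¹' (Set.Iio (-Y₀)) := rfl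
    rw [this]; exact isOpen_Iio.preimage Complex.continuous_im
  have hHconn : IsPreconnected H := (convex_halfSpace_im_lt (-Y₀)).isPreconnected
  have hanal : AnalyticOnNhd ℂ Ψ H := hhol.analyticOnNhd hHopen
  -- the image is open
  have himopen : IsOpen (Ψ '' H) := by
    rcases hanal.is_constant_or_isOpen hHconn with ⟨c, hc⟩ | hopen
    · exfalso
      set W₀ : ℂ := ⟨0, -(Y₀ + 1)⟩ with hW₀
      have h0 : W₀ ∈ H := by show W₀.im < -Y₀; show -(Y₀ + 1) < -Y₀; linarith
      have h1 : W₀ + 1 ∈ H := by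
        show (W₀ + 1).im < -Y₀
        rw [Complex.add_im, Complex.one_im]
        show -(Y₀ + 1) + 0 < -Y₀; linarith
      have := hcomm W₀ h0
      rw [hc _ h0, hc _ h1] at this
      simp at this
    · exact hopen H Set.Subset.rfl hHopen
  -- im comparisons from the bound
  have him : ∀ W ∈ H, |(Ψ W).im - W.im| ≤ M := by
    intro W hW
    have h1 : |(Ψ W - W).im| ≤ ‖Ψ W - W‖ := Complex.abs_im_le_norm _
    have h2 := hbdd W hW
    simp only [Complex.sub_im] at h1
    linarith [h1.trans h2]
  -- closedness within P
  have hclosed : ∀ w ∈ P, w ∈ closure (Ψ '' H) → w ∈ Ψ '' H := by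
    intro w hwP hwcl
    set K : Set ℂ := Metric.closedBall w (M + 1) ∩ {W : ℂ | W.im ≤ -(Y₀ + 1/2)} with hK
    have hKcpt : IsCompact K := (isCompact_closedBall w (M + 1)).inter_right
      (isClosed_le Complex.continuous_im continuous_const)
    have hKH : K ⊆ H := by
      intro W hW
      have h2 : W.im ≤ -(Y₀ + 1/2) := hW.2
      show W.im < -Y₀
      linarith
    -- preimages of points near w lie in K
    have hpre : Ψ '' H ∩ Metric.ball w (1/2) ⊆ Ψ '' K := by
      rintro x ⟨⟨W, hWH, rfl⟩, hxball⟩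
      refine ⟨W, ⟨?_, ?_⟩, rfl⟩
      · have h1 : ‖Ψ W - W‖ ≤ M := hbdd W hWH
        have h2 : ‖Ψ W - w‖ < 1/2 := by
          rw [← dist_eq_norm]; exact hxball
        have h3 : ‖W - w‖ ≤ M + 1 := by
          calc ‖W - w‖ = ‖(W - Ψ W) + (Ψ W - w)‖ := by ring_nf
            _ ≤ ‖W - Ψ W‖ + ‖Ψ W - w‖ := norm_add_le _ _
            _ ≤ M + 1 := by rw [norm_sub_rev (Ψ W)] at h1; linarith
        rwa [Metric.mem_closedBall, dist_eq_norm]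
      · have h1 : |(Ψ W).im - W.im| ≤ M := him W hWH
        have h2 : |(Ψ W - w).im| ≤ ‖Ψ W - w‖ := Complex.abs_im_le_norm _
        have h3 : ‖Ψ W - w‖ < 1/2 := by rw [← dist_eq_norm]; exact hxball
        simp only [Complex.sub_im] at h2
        have h4 : w.im < -(Y₀ + M + 1) := hwP
        have h5 : W.im - (Ψ W).im ≤ M := by
          have := abs_le.mp h1; linarith [this.1]
        have h6 : (Ψ W).im - w.im ≤ 1/2 := by
          have := abs_le.mp (h2.trans h3.le); linarith [this.2]
        show W.im ≤ -(Y₀ + 1/2)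
        linarith
    -- hence w is in the (closed) image of the compact set K
    have hwclK : w ∈ closure (Ψ '' K) := by
      rw [mem_closure_iff] at hwcl ⊢
      intro o ho hwo
      obtain ⟨y, hy⟩ := hwcl (o ∩ Metric.ball w (1/2)) (ho.inter Metric.isOpen_ball)
        ⟨hwo, Metric.mem_ball_self (by norm_num)⟩
      exact ⟨y, hy.1.1, hpre ⟨hy.2, hy.1.2⟩⟩
    have hKim : IsClosed (Ψ '' K) :=
      (hKcpt.image_of_continuousOn ((hhol.continuousOn).mono hKH)).isClosed
    exact Set.image_mono (f := Ψ) hKH (hKim.closure_eq ▸ hwclK)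
  -- P meets the image
  have hnon : (P ∩ Ψ '' H).Nonempty := by
    set W₁ : ℂ := ⟨0, -(Y₀ + 2*M + 2)⟩ with hW₁
    have hW₁H : W₁ ∈ H := by show W₁.im < -Y₀; show -(Y₀ + 2*M + 2) < -Y₀; linarith
    refine ⟨Ψ W₁, ?_, ⟨W₁, hW₁H, rfl⟩⟩
    have h1 : |(Ψ W₁).im - W₁.im| ≤ M := him W₁ hW₁H
    have := (abs_le.mp h1).2
    show (Ψ W₁).im < -(Y₀ + M + 1)
    have hIm : W₁.im = -(Y₀ + 2*M + 2) := rfl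
    linarith
  -- connectedness argument
  have hPconn : IsPreconnected P := (convex_halfSpace_im_lt (-(Y₀ + M + 1))).isPreconnected
  set v : Set ℂ := (closure (Ψ '' H))ᶜ with hv
  have hcover : P ⊆ Ψ '' H ∪ v := by
    intro w hw
    by_cases hc : w ∈ closure (Ψ '' H)
    · exact Or.inl (hclosed w hw hc)
    · exact Or.inr hc
  have hvempty : P ∩ v = ∅ := by
    by_contra hne
    obtain ⟨x, hx⟩ := hPconn (Ψ '' H) v himopen (isClosed_closure.isOpen_compl) hcover
      ⟨hnon.choose, hnon.choose_spec.1, hnon.choose_spec.2⟩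
      (Set.nonempty_iff_ne_empty.mpr hne)
    exact hx.2.2 (subset_closure hx.2.1)
  intro w hw
  rcases hcover hw with h | h
  · exact h
  · exact absurd (Set.mem_inter hw h) (by rw [hvempty]; exact Set.notMem_empty w)
end

section
/- Let Y > 0 and let Ψ be holomorphic on H = {W ∈ ℂ : Im W < −Y}, commuting with T₁ (Ψ(W+1) = Ψ(W)+1), with Ψ − id bounded on H. Then: (1) there exists c ∈ ℂ such that Ψ(W) − W → c as Im W → −∞, uniformly in Re W; (2) there exists a unique holomorphic function ψ on the disc D = {w ∈ ℂ : |w| < e^{−2πY}} such that ψ(0) = 0 and ψ(exp(−2πiW)) = exp(−2πiΨ(W)) for all W ∈ H; and (3) ψ′(0) = exp(−2πic). -/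
open Filter Complex

noncomputable def EE (W : ℂ) : ℂ := Complex.exp (-(2 * Real.pi * Complex.I * W))
noncomputable def LL (w : ℂ) : ℂ := Complex.I * Complex.log w / (2 * Real.pi)
noncomputable def LL' (w : ℂ) : ℂ :=
  Complex.I * (Complex.log (-w) + Real.pi * Complex.I) / (2 * Real.pi)

lemma norm_EE (W : ℂ) : ‖EE W‖ = Real.exp (2 * Real.pi * W.im) := by
  rw [EE, Complex.norm_exp]
  congr 1
  simp [Complex.mul_re, Complex.mul_im]

lemma EE_LL {w : ℂ} (hw : w ≠ 0) : EE (LL w) = w := by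
  rw [EE, LL]
  have hπ : (Real.pi : ℂ) ≠ 0 := Complex.ofReal_ne_zero.2 Real.pi_ne_zero
  have : -(2 * (Real.pi:ℂ) * Complex.I * (Complex.I * Complex.log w / (2 * Real.pi)))
      = Complex.log w := by
    field_simp
    linear_combination (-Complex.log w) * Complex.I_mul_I
  rw [this, Complex.exp_log hw]

lemma EE_LL' {w : ℂ} (hw : w ≠ 0) : EE (LL' w) = w := by
  rw [EE, LL']
  have hπ : (Real.pi : ℂ) ≠ 0 := Complex.ofReal_ne_zero.2 Real.pi_ne_zero
  have : -(2 * (Real.pi:ℂ) * Complex.I *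
      (Complex.I * (Complex.log (-w) + Real.pi * Complex.I) / (2 * Real.pi)))
      = Complex.log (-w) + Real.pi * Complex.I := by
    field_simp
    linear_combination (-(Complex.log (-w) + Real.pi * Complex.I)) * Complex.I_mul_I
  rw [this, Complex.exp_add, Complex.exp_log (neg_ne_zero.2 hw), Complex.exp_pi_mul_I]
  ring

lemma EE_eq_iff {W₁ W₂ : ℂ} (h : EE W₁ = EE W₂) : ∃ n : ℤ, W₂ = W₁ + n := by
  rw [EE, EE, Complex.exp_eq_exp_iff_exists_int] at h
  obtain ⟨n, hn⟩ := h
  refine ⟨n, ?_⟩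
  have hne : (2 * (Real.pi:ℂ) * Complex.I) ≠ 0 := by
    simp [Real.pi_ne_zero, Complex.I_ne_zero]
  have : (2 * (Real.pi:ℂ) * Complex.I) * W₂ = (2 * (Real.pi:ℂ) * Complex.I) * (W₁ + n) := by
    linear_combination hn
  exact mul_left_cancel₀ hne this

/-- Descent of a near-identity map commuting with `T₁` on a lower half-plane through
`E(W) = exp (-2πiW)`: the translation part at `-i∞` exists, and the induced germ `ψ`
at the origin is holomorphic, unique, and has multiplier `exp (-2πic)`. -/
theorem stmt_5 (Y : ℝ) (hY : 0 < Y) (Ψ : ℂ → ℂ)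
    (hhol : DifferentiableOn ℂ Ψ {W : ℂ | W.im < -Y})
    (hcomm : ∀ W : ℂ, W.im < -Y → Ψ (W + 1) = Ψ W + 1)
    (hbdd : ∃ M : ℝ, ∀ W : ℂ, W.im < -Y → ‖Ψ W - W‖ ≤ M) :
    ∃ c : ℂ,
      -- (1) `Ψ(W) - W → c` as `Im W → -∞`, uniformly in `Re W`
      Tendsto (fun W : ℂ => Ψ W - W) (comap Complex.im atBot) (nhds c) ∧
      -- (2) existence and uniqueness of the descended map `ψ`
      ∃ ψ : ℂ → ℂ,
        DifferentiableOn ℂ ψ (Metric.ball (0 : ℂ) (Real.exp (-(2 * Real.pi * Y)))) ∧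
        ψ 0 = 0 ∧
        (∀ W : ℂ, W.im < -Y →
          ψ (Complex.exp (-(2 * Real.pi * Complex.I * W))) =
            Complex.exp (-(2 * Real.pi * Complex.I * Ψ W))) ∧
        (∀ ψ' : ℂ → ℂ,
          DifferentiableOn ℂ ψ' (Metric.ball (0 : ℂ) (Real.exp (-(2 * Real.pi * Y)))) →
          ψ' 0 = 0 →
          (∀ W : ℂ, W.im < -Y →
            ψ' (Complex.exp (-(2 * Real.pi * Complex.I * W))) =
              Complex.exp (-(2 * Real.pi * Complex.I * Ψ W))) →
          ∀ w ∈ Metric.ball (0 : ℂ) (Real.exp (-(2 * Real.pi * Y))), ψ' w = ψ w) ∧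
        -- (3) multiplier at the origin
        deriv ψ 0 = Complex.exp (-(2 * Real.pi * Complex.I * c)) := by
  classical
  obtain ⟨M, hM⟩ := hbdd
  have hπ : (0:ℝ) < 2 * Real.pi := by positivity
  set r : ℝ := Real.exp (-(2 * Real.pi * Y)) with hr
  have hr0 : 0 < r := Real.exp_pos _
  have hopen : IsOpen {W : ℂ | W.im < -Y} := by
    exact isOpen_lt Complex.continuous_im continuous_const
  -- integer equivariance
  have hZ : ∀ n : ℤ, ∀ W : ℂ, W.im < -Y → Ψ (W + n) = Ψ W + n := by
    intro n
    induction n using Int.induction_on with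
    | zero => simp
    | succ k ih =>
      intro W hW
      have h1 : ((W + k : ℂ)).im < -Y := by simpa using hW
      have h2 := hcomm (W + k) h1
      have ih' := ih W hW
      push_cast at ih' ⊢
      rw [← add_assoc, h2, ih']
      ring
    | pred k ih =>
      intro W hW
      have h1 : ((W - (k+1) : ℂ)).im < -Y := by simpa using hW
      have h2 := hcomm (W - (k+1)) h1
      have h3 : (W - ((k:ℂ)+1)) + 1 = W + -(k:ℂ) := by ring
      rw [h3] at h2
      have ih' := ih W hW
      push_cast at ih' ⊢
      have h4 : W + (-(k:ℂ) - 1) = W - ((k:ℂ)+1) := by ring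
      rw [h4]
      linear_combination ih' - h2
  -- invariance of Ψ W - W under change of preimage
  have hInv : ∀ W₁ W₂ : ℂ, W₁.im < -Y → W₂.im < -Y → EE W₁ = EE W₂ →
      Ψ W₁ - W₁ = Ψ W₂ - W₂ := by
    intro W₁ W₂ h1 h2 hE
    obtain ⟨n, hn⟩ := EE_eq_iff hE
    rw [hn, hZ n W₁ h1]
    ring
  -- `L w` lands in the half-plane
  have hLim : ∀ w : ℂ, w ≠ 0 → ‖w‖ < r → (LL w).im < -Y := by
    intro w hw hwr
    have h1 : Real.exp (2 * Real.pi * (LL w).im) = ‖w‖ := by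
      rw [← norm_EE, EE_LL hw]
    have h2 : Real.exp (2 * Real.pi * (LL w).im) < Real.exp (2 * Real.pi * (-Y)) := by
      rw [h1]
      have h3 : 2 * Real.pi * (-Y) = -(2 * Real.pi * Y) := by ring
      rw [h3]
      exact hwr
    have h5 := (Real.exp_lt_exp).1 h2
    exact lt_of_mul_lt_mul_left h5 (le_of_lt hπ)
  -- the descended function on the punctured disc
  set F : ℂ → ℂ := fun w => Ψ (LL w) - LL w with hF
  have hball : Metric.ball (0:ℂ) r ∈ nhds (0:ℂ) :=
    Metric.ball_mem_nhds _ hr0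
  have hmemball : ∀ w : ℂ, w ∈ Metric.ball (0:ℂ) r ↔ ‖w‖ < r := by
    intro w; rw [Metric.mem_ball, dist_zero_right]
  -- F is differentiable on the punctured ball
  have hFdiff : DifferentiableOn ℂ F (Metric.ball (0:ℂ) r \ {0}) := by
    intro w₀ hw₀
    obtain ⟨hw₀b, hw₀0⟩ := hw₀
    have hw₀0' : w₀ ≠ 0 := hw₀0
    have hw₀r : ‖w₀‖ < r := (hmemball w₀).1 hw₀b
    apply DifferentiableAt.differentiableWithinAt
    by_cases hslit : w₀ ∈ Complex.slitPlane
    · -- principal branch works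
      have hL : DifferentiableAt ℂ LL w₀ := by
        apply DifferentiableAt.div_const
        exact (Complex.differentiableAt_log hslit).const_mul _
      have hΨ : DifferentiableAt ℂ Ψ (LL w₀) := by
        apply (hhol.differentiableAt (hopen.mem_nhds ?_))
        exact hLim w₀ hw₀0' hw₀r
      exact (hΨ.comp w₀ hL).sub hL
    · -- w₀ is a negative real; use the other branch
      have hre : w₀.re < 0 := by
        rw [Complex.mem_slitPlane_iff] at hslit
        push_neg at hslit
        obtain ⟨h1, h2⟩ := hslit
        rcases (not_lt.1 (fun hh => absurd hh (not_lt.2 h1))).lt_or_eq with h | h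
        · exact h
        · exact absurd (Complex.ext h h2) hw₀0'
      -- the set U
      have hU : {w : ℂ | w.re < 0} ∩ Metric.ball (0:ℂ) r ∈ nhds w₀ := by
        apply Filter.inter_mem
        · exact (isOpen_lt Complex.continuous_re continuous_const).mem_nhds hre
        · exact Metric.isOpen_ball.mem_nhds hw₀b
      have hL'im : ∀ w : ℂ, w ≠ 0 → ‖w‖ < r → (LL' w).im < -Y := by
        intro w hw hwr
        have h1 : Real.exp (2 * Real.pi * (LL' w).im) = ‖w‖ := by
          rw [← norm_EE, EE_LL' hw]
        have h2 : Real.exp (2 * Real.pi * (LL' w).im) < Real.exp (2 * Real.pi * (-Y)) := by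
          rw [h1]
          have h3 : 2 * Real.pi * (-Y) = -(2 * Real.pi * Y) := by ring
          rw [h3]; exact hwr
        exact lt_of_mul_lt_mul_left ((Real.exp_lt_exp).1 h2) (le_of_lt hπ)
      have hEq : ∀ w ∈ ({w : ℂ | w.re < 0} ∩ Metric.ball (0:ℂ) r),
          F w = Ψ (LL' w) - LL' w := by
        intro w hw
        obtain ⟨hw1, hw2⟩ := hw
        have hw0 : w ≠ 0 := by
          intro h; rw [h] at hw1; simp at hw1
        have hwr : ‖w‖ < r := (hmemball w).1 hw2
        exact hInv (LL w) (LL' w) (hLim w hw0 hwr) (hL'im w hw0 hwr)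
          (by rw [EE_LL hw0, EE_LL' hw0])
      have hG' : DifferentiableAt ℂ (fun w => Ψ (LL' w) - LL' w) w₀ := by
        have hslit' : -w₀ ∈ Complex.slitPlane := by
          rw [Complex.mem_slitPlane_iff]
          left; simpa using hre
        have hL' : DifferentiableAt ℂ LL' w₀ := by
          apply DifferentiableAt.div_const
          apply DifferentiableAt.const_mul
          apply DifferentiableAt.add_const
          exact (Complex.differentiableAt_log hslit').comp w₀ differentiable_neg.differentiableAt
        have hΨ : DifferentiableAt ℂ Ψ (LL' w₀) := by
          apply (hhol.differentiableAt (hopen.mem_nhds ?_))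
          exact hL'im w₀ hw₀0' hw₀r
        exact (hΨ.comp w₀ hL').sub hL'
      apply hG'.congr_of_eventuallyEq
      filter_upwards [hU] with w hw
      exact hEq w hw
  -- boundedness
  have hFbdd : BddAbove (norm ∘ F '' (Metric.ball (0:ℂ) r \ {0})) := by
    refine ⟨M, ?_⟩
    rintro x ⟨w, ⟨hwb, hw0⟩, rfl⟩
    exact hM (LL w) (hLim w hw0 ((hmemball w).1 hwb))
  -- removable singularity
  set c : ℂ := limUnder (nhdsWithin 0 {(0:ℂ)}ᶜ) F with hc
  set G : ℂ → ℂ := Function.update F 0 c with hG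
  have hGdiff : DifferentiableOn ℂ G (Metric.ball (0:ℂ) r) :=
    Complex.differentiableOn_update_limUnder_of_bddAbove hball hFdiff hFbdd
  have hG0 : G 0 = c := Function.update_self _ _ _
  have hGF : ∀ w : ℂ, w ≠ 0 → G w = F w := fun w hw => Function.update_of_ne hw _ _
  have hGat0 : DifferentiableAt ℂ G 0 := hGdiff.differentiableAt hball
  have hGcont : ContinuousAt G 0 := hGat0.continuousAt
  -- F(E W) = Ψ W - W for W in the half-plane
  have hkey : ∀ W : ℂ, W.im < -Y → F (EE W) = Ψ W - W := by
    intro W hW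
    have hne : EE W ≠ 0 := Complex.exp_ne_zero _
    have hnorm : ‖EE W‖ < r := by
      rw [norm_EE]
      apply Real.exp_lt_exp.2
      have : -(2 * Real.pi * Y) = 2 * Real.pi * (-Y) := by ring
      rw [this]
      exact (mul_lt_mul_iff_right₀ hπ).2 hW
    exact hInv (LL (EE W)) W (hLim _ hne hnorm) hW (EE_LL hne)
  refine ⟨c, ?_, ?_⟩
  · -- part (1): the limit at -i∞
    have hE0 : Tendsto EE (comap Complex.im atBot) (nhdsWithin 0 {(0:ℂ)}ᶜ) := by
      apply tendsto_nhdsWithin_of_tendsto_nhds_of_eventually_within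
      · rw [tendsto_zero_iff_norm_tendsto_zero]
        have h1 : Tendsto (fun W : ℂ => 2 * Real.pi * W.im) (comap Complex.im atBot) atBot :=
          Tendsto.const_mul_atBot hπ tendsto_comap
        have h2 := Real.tendsto_exp_atBot.comp h1
        apply h2.congr
        intro W
        exact (norm_EE W).symm
      · exact Filter.Eventually.of_forall (fun W => Complex.exp_ne_zero _)
    have hFc : Tendsto F (nhdsWithin 0 {(0:ℂ)}ᶜ) (nhds c) := by
      have h1 := hGcont.tendsto
      rw [hG0] at h1
      apply (h1.mono_left nhdsWithin_le_nhds).congr'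
      filter_upwards [self_mem_nhdsWithin] with w hw
      exact (hGF w hw)
    have hcomp := hFc.comp hE0
    apply hcomp.congr'
    have hev : ∀ᶠ W : ℂ in comap Complex.im atBot, W.im < -Y :=
      preimage_mem_comap (Iio_mem_atBot _)
    filter_upwards [hev] with W hW
    exact hkey W hW
  · -- part (2) and (3)
    refine ⟨fun w => w * Complex.exp (-(2 * Real.pi * Complex.I) * G w), ?_, ?_, ?_, ?_, ?_⟩
    · exact differentiableOn_id.mul ((hGdiff.const_mul (-(2 * Real.pi * Complex.I))).cexp)
    · simp
    · intro W hW
      show EE W * Complex.exp (-(2 * Real.pi * Complex.I) * G (EE W)) =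
        Complex.exp (-(2 * Real.pi * Complex.I * Ψ W))
      have hne : EE W ≠ 0 := Complex.exp_ne_zero _
      rw [hGF (EE W) hne, hkey W hW, EE, ← Complex.exp_add]
      congr 1
      ring
    · intro ψ' hd h0 heq w hw
      by_cases hw0 : w = 0
      · subst hw0; rw [h0]; simp
      · have hwr : ‖w‖ < r := (hmemball w).1 hw
        have hW := hLim w hw0 hwr
        have hEE : Complex.exp (-(2 * Real.pi * Complex.I * LL w)) = w := EE_LL hw0
        have h1 := heq (LL w) hW
        rw [hEE] at h1
        show ψ' w = w * Complex.exp (-(2 * Real.pi * Complex.I) * G w)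
        rw [h1, hGF w hw0]
        show _ = w * Complex.exp (-(2 * Real.pi * Complex.I) * (Ψ (LL w) - LL w))
        nth_rewrite 2 [← hEE]
        rw [← Complex.exp_add]
        congr 1
        ring
    · have hGd : HasDerivAt G (deriv G 0) 0 := hGat0.hasDerivAt
      have hh : HasDerivAt (fun w => Complex.exp (-(2 * Real.pi * Complex.I) * G w))
          (Complex.exp (-(2 * Real.pi * Complex.I) * G 0) *
            (-(2 * Real.pi * Complex.I) * deriv G 0)) 0 :=
        (hGd.const_mul _).cexp
      have hd := ((hasDerivAt_id (0:ℂ)).mul hh).deriv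
      simp only [Pi.mul_def, id_eq] at hd
      rw [hd, hG0]
      simp only [one_mul, zero_mul, add_zero, mul_zero]
      congr 1
      ring
end

section
/- Let Y₀ ≥ 0 and N > 0 with N e^{−2πY₀} ≤ 1/2, and let Λ be holomorphic on H = {W ∈ ℂ : Im W < −Y₀} with Λ(W+1) = Λ(W) and |Λ(W)| ≤ N e^{2π Im W} for all W ∈ H. Set Ψ := id + Λ, let α ∈ ℂ with Im α ≤ −1, and set F := Ψ ∘ T_α. Then: (a) for every n ≥ 0 the iterate F^{∘n} maps H into H and Im F^{∘n}(W) ≤ Im W + n·Im α + 1 for all W ∈ H; (b) the series G(W) := Σ_{n ≥ 0} Λ(F^{∘n}(W) + α) converges absolutely and uniformly on H and satisfies |G(W)| ≤ 2N e^{2π(Im W + Im α)} for all W ∈ H; (c) the map H_* := id + G is holomorphic on H, commutes with T₁, and satisfies H_* ∘ Ψ ∘ T_α = T_α ∘ H_* on H. -/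
open Filter Complex

/-- Telescopic-series construction of the Fatou–Glutsyuk normalization `H_* = id + G`
conjugating the return map `Ψ ∘ T_α` (with `Ψ = id + Λ`, `F = Ψ ∘ T_α`) to the
translation `T_α`, together with the exponential estimates on `G`. -/
theorem stmt_6 (Y₀ N : ℝ) (hY₀ : 0 ≤ Y₀) (hN : 0 < N)
    (hNY : N * Real.exp (-(2 * Real.pi * Y₀)) ≤ 1 / 2)
    (Λ : ℂ → ℂ)
    (hhol : DifferentiableOn ℂ Λ {W : ℂ | W.im < -Y₀})
    (hper : ∀ W : ℂ, W.im < -Y₀ → Λ (W + 1) = Λ W)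
    (hbound : ∀ W : ℂ, W.im < -Y₀ → ‖Λ W‖ ≤ N * Real.exp (2 * Real.pi * W.im))
    (α : ℂ) (hα : α.im ≤ -1)
    (F : ℂ → ℂ) (hF : ∀ W : ℂ, F W = (W + α) + Λ (W + α))
    (G : ℂ → ℂ) (hG : ∀ W : ℂ, G W = ∑' n : ℕ, Λ (F^[n] W + α)) :
    -- (a) the iterates of `F` stay in the half-plane and descend linearly
    (∀ (n : ℕ) (W : ℂ), W.im < -Y₀ →
        (F^[n] W).im < -Y₀ ∧ (F^[n] W).im ≤ W.im + n * α.im + 1) ∧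
    -- (b) absolute and uniform convergence of the series defining `G`, and its bound
    (∀ W : ℂ, W.im < -Y₀ → Summable fun n : ℕ => ‖Λ (F^[n] W + α)‖) ∧
    (∃ u : ℕ → ℝ, Summable u ∧
        ∀ (n : ℕ) (W : ℂ), W.im < -Y₀ → ‖Λ (F^[n] W + α)‖ ≤ u n) ∧
    (∀ W : ℂ, W.im < -Y₀ →
        ‖G W‖ ≤ 2 * N * Real.exp (2 * Real.pi * (W.im + α.im))) ∧
    -- (c) `H_* = id + G` is holomorphic, commutes with `T₁`, and conjugates
    -- `Ψ ∘ T_α` to `T_α`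
    DifferentiableOn ℂ (fun W => W + G W) {W : ℂ | W.im < -Y₀} ∧
    (∀ W : ℂ, W.im < -Y₀ → (W + 1) + G (W + 1) = (W + G W) + 1) ∧
    (∀ W : ℂ, W.im < -Y₀ → F W + G (F W) = (W + G W) + α) := by
  have hπpos := Real.pi_pos
  have hπ1 : (1:ℝ) ≤ Real.pi := by linarith [Real.pi_gt_three]
  have hr0 : (0:ℝ) ≤ Real.exp (-Real.pi) := (Real.exp_pos _).le
  have hr1 : Real.exp (-Real.pi) < 1 := Real.exp_lt_one_iff.mpr (by linarith)
  have hr2 : Real.exp (-Real.pi) ≤ 1/2 := by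
    have h2 : (2:ℝ) ≤ Real.exp 1 := by
      have := Real.exp_one_gt_d9; linarith
    calc Real.exp (-Real.pi) ≤ Real.exp (-1) := Real.exp_le_exp.mpr (by linarith)
      _ = (Real.exp 1)⁻¹ := by rw [Real.exp_neg]
      _ ≤ (2:ℝ)⁻¹ := inv_anti₀ (by norm_num) h2
      _ = 1/2 := by norm_num
  -- smallness of the perturbation below the line Im = -Y₀
  have hsmall : ∀ t : ℝ, t ≤ -Y₀ → N * Real.exp (2*Real.pi*t) ≤ 1/2 := by
    intro t ht
    have h1 : Real.exp (2*Real.pi*t) ≤ Real.exp (-(2*Real.pi*Y₀)) :=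
      Real.exp_le_exp.mpr (by nlinarith)
    nlinarith [Real.exp_pos (2*Real.pi*t)]
  have hΛ : ∀ V : ℂ, V.im < -Y₀ → ‖Λ (V + α)‖ ≤ N * Real.exp (2*Real.pi*(V.im + α.im)) := by
    intro V hV
    have him : (V+α).im = V.im + α.im := by simp
    have h1 : (V+α).im < -Y₀ := by rw [him]; linarith
    have := hbound (V+α) h1
    rwa [him] at this
  have hFle : ∀ V : ℂ, V.im < -Y₀ → (F V).im ≤ V.im + α.im + ‖Λ (V + α)‖ := by
    intro V hV
    rw [hF]
    simp only [Complex.add_im]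
    have h1 := Complex.abs_im_le_norm (Λ (V+α))
    have h2 : ‖Λ (V+α)‖ = ‖Λ (V+α)‖ := rfl
    have h3 : (Λ (V+α)).im ≤ |(Λ (V+α)).im| := le_abs_self _
    linarith
  have hFH : ∀ V : ℂ, V.im < -Y₀ → (F V).im < -Y₀ ∧ (F V).im ≤ V.im + α.im + 1/2 := by
    intro V hV
    have h1 := hFle V hV
    have h2 := hΛ V hV
    have h3 := hsmall (V.im + α.im) (by linarith)
    constructor <;> linarith
  -- geometric decay helper
  have hgeo : ∀ (n : ℕ) (s t : ℝ), s + n/2 ≤ t →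
      N * Real.exp (2*Real.pi*s) ≤ N * Real.exp (2*Real.pi*t) * Real.exp (-Real.pi)^n := by
    intro n s t h
    have e1 : Real.exp (2*Real.pi*s) ≤ Real.exp (2*Real.pi*t + (n:ℝ)*(-Real.pi)) := by
      apply Real.exp_le_exp.mpr
      nlinarith
    rw [Real.exp_add, Real.exp_nat_mul] at e1
    calc N * Real.exp (2*Real.pi*s)
        ≤ N * (Real.exp (2*Real.pi*t) * Real.exp (-Real.pi)^n) :=
          mul_le_mul_of_nonneg_left e1 hN.le
      _ = N * Real.exp (2*Real.pi*t) * Real.exp (-Real.pi)^n := by ring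
  -- the key induction
  have hkey : ∀ (W : ℂ), W.im < -Y₀ → ∀ n : ℕ,
      (F^[n] W).im < -Y₀ ∧ (F^[n] W).im + α.im ≤ W.im + α.im - n/2 ∧
      (F^[n] W).im ≤ W.im + n*α.im +
        N * Real.exp (2*Real.pi*(W.im + α.im)) * ∑ k ∈ Finset.range n, Real.exp (-Real.pi)^k := by
    intro W hW n
    induction n with
    | zero => simp [hW]
    | succ n ih =>
      obtain ⟨ih1, ih2, ih3⟩ := ih
      have h1 := hFle (F^[n] W) ih1
      have h2 := hΛ (F^[n] W) ih1
      have h3 := hFH (F^[n] W) ih1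
      have hiter : F^[n+1] W = F (F^[n] W) := Function.iterate_succ_apply' F n W
      have hb : ‖Λ (F^[n] W + α)‖ ≤
          N * Real.exp (2*Real.pi*(W.im + α.im)) * Real.exp (-Real.pi)^n :=
        le_trans h2 (hgeo n ((F^[n] W).im + α.im) (W.im + α.im) (by linarith))
      rw [hiter]
      refine ⟨h3.1, by push_cast; linarith [h3.2], ?_⟩
      rw [Finset.sum_range_succ, mul_add]
      push_cast
      nlinarith [h3.2]
  -- term-wise bound
  have hterm : ∀ W : ℂ, W.im < -Y₀ → ∀ n : ℕ,
      ‖Λ (F^[n] W + α)‖ ≤ N * Real.exp (2*Real.pi*(W.im + α.im)) * Real.exp (-Real.pi)^n := by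
    intro W hW n
    obtain ⟨h1, h2, _⟩ := hkey W hW n
    exact le_trans (hΛ _ h1) (hgeo n ((F^[n] W).im + α.im) (W.im + α.im) (by linarith))
  have hsumg : Summable (fun n : ℕ => Real.exp (-Real.pi)^n) :=
    summable_geometric_of_lt_one hr0 hr1
  have htsumg : ∑' n : ℕ, Real.exp (-Real.pi)^n = (1 - Real.exp (-Real.pi))⁻¹ :=
    tsum_geometric_of_lt_one hr0 hr1
  have hinv2 : (1 - Real.exp (-Real.pi))⁻¹ ≤ 2 := by
    have h1 : (1:ℝ)/2 ≤ 1 - Real.exp (-Real.pi) := by linarith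
    calc (1 - Real.exp (-Real.pi))⁻¹ ≤ ((1:ℝ)/2)⁻¹ := inv_anti₀ (by norm_num) h1
      _ = 2 := by norm_num
  have hsum2 : ∀ n : ℕ, ∑ k ∈ Finset.range n, Real.exp (-Real.pi)^k ≤ 2 := by
    intro n
    calc ∑ k ∈ Finset.range n, Real.exp (-Real.pi)^k
        ≤ ∑' k : ℕ, Real.exp (-Real.pi)^k :=
          Summable.sum_le_tsum _ (fun i _ => pow_nonneg hr0 i) hsumg
      _ = (1 - Real.exp (-Real.pi))⁻¹ := htsumg
      _ ≤ 2 := hinv2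
  -- summability of the norms
  have hsumn : ∀ W : ℂ, W.im < -Y₀ → Summable (fun n : ℕ => ‖Λ (F^[n] W + α)‖) := by
    intro W hW
    exact Summable.of_nonneg_of_le (fun n => norm_nonneg _) (hterm W hW)
      (hsumg.mul_left _)
  -- uniform bound
  have hub : ∀ (n : ℕ) (W : ℂ), W.im < -Y₀ →
      ‖Λ (F^[n] W + α)‖ ≤ N * Real.exp (2*Real.pi*(-Y₀ + α.im)) * Real.exp (-Real.pi)^n := by
    intro n W hW
    refine le_trans (hterm W hW n) (mul_le_mul_of_nonneg_right ?_ (pow_nonneg hr0 n))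
    apply mul_le_mul_of_nonneg_left _ hN.le
    exact Real.exp_le_exp.mpr (by nlinarith)
  have hHopen : IsOpen {W : ℂ | W.im < -Y₀} := isOpen_lt Complex.continuous_im continuous_const
  refine ⟨?_, hsumn, ⟨_, hsumg.mul_left (N * Real.exp (2*Real.pi*(-Y₀ + α.im))), hub⟩, ?_, ?_, ?_, ?_⟩
  -- (a)
  · intro n W hW
    obtain ⟨h1, h2, h3⟩ := hkey W hW n
    refine ⟨h1, ?_⟩
    have hc : N * Real.exp (2*Real.pi*(W.im + α.im)) ≤ 1/2 := hsmall _ (by linarith)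
    have hcn : 0 ≤ N * Real.exp (2*Real.pi*(W.im + α.im)) := by positivity
    have hs := hsum2 n
    have hsn : 0 ≤ ∑ k ∈ Finset.range n, Real.exp (-Real.pi)^k :=
      Finset.sum_nonneg fun i _ => pow_nonneg hr0 i
    nlinarith
  -- (b) bound on G
  · intro W hW
    rw [hG]
    have hn := hsumn W hW
    calc ‖∑' n : ℕ, Λ (F^[n] W + α)‖
        ≤ ∑' n : ℕ, ‖Λ (F^[n] W + α)‖ := norm_tsum_le_tsum_norm hn
      _ ≤ ∑' n : ℕ, N * Real.exp (2*Real.pi*(W.im + α.im)) * Real.exp (-Real.pi)^n :=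
          Summable.tsum_le_tsum (hterm W hW) hn (hsumg.mul_left _)
      _ = N * Real.exp (2*Real.pi*(W.im + α.im)) * ∑' n : ℕ, Real.exp (-Real.pi)^n :=
          tsum_mul_left
      _ = N * Real.exp (2*Real.pi*(W.im + α.im)) * (1 - Real.exp (-Real.pi))⁻¹ := by
          rw [htsumg]
      _ ≤ 2 * N * Real.exp (2*Real.pi*(W.im + α.im)) := by
          have hcn : 0 ≤ N * Real.exp (2*Real.pi*(W.im + α.im)) := by positivity
          nlinarith [inv_nonneg.mpr (by linarith : (0:ℝ) ≤ 1 - Real.exp (-Real.pi))]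
  -- (c) holomorphy
  · have hFdiff : DifferentiableOn ℂ F {W : ℂ | W.im < -Y₀} := by
      have hmaps : ∀ W : ℂ, W ∈ {W : ℂ | W.im < -Y₀} → W + α ∈ {W : ℂ | W.im < -Y₀} := by
        intro W hW
        simp only [Set.mem_setOf_eq, Complex.add_im] at *
        linarith
      have h1 : DifferentiableOn ℂ (fun W => (W + α) + Λ (W + α)) {W : ℂ | W.im < -Y₀} := by
        apply DifferentiableOn.add (differentiableOn_id.add (differentiableOn_const _))
        exact DifferentiableOn.comp hhol
          (differentiableOn_id.add (differentiableOn_const _)) hmaps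
      exact h1.congr fun W _ => hF W
    have hiterd : ∀ n : ℕ, DifferentiableOn ℂ (F^[n]) {W : ℂ | W.im < -Y₀} ∧
        Set.MapsTo (F^[n]) {W : ℂ | W.im < -Y₀} {W : ℂ | W.im < -Y₀} := by
      intro n
      induction n with
      | zero => exact ⟨differentiableOn_id, Set.mapsTo_id _⟩
      | succ n ih =>
        have hFmaps : Set.MapsTo F {W : ℂ | W.im < -Y₀} {W : ℂ | W.im < -Y₀} :=
          fun W hW => (hFH W hW).1
        rw [Function.iterate_succ']
        exact ⟨hFdiff.comp ih.1 ih.2, hFmaps.comp ih.2⟩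
    have htd : ∀ n : ℕ, DifferentiableOn ℂ (fun W => Λ (F^[n] W + α)) {W : ℂ | W.im < -Y₀} := by
      intro n
      apply DifferentiableOn.comp hhol ((hiterd n).1.add (differentiableOn_const _))
      intro W hW
      have := (hiterd n).2 hW
      simp only [Set.mem_setOf_eq, Complex.add_im, Pi.add_apply] at *
      linarith
    have heq : (fun W => W + G W) = fun W => W + ∑' n : ℕ, Λ (F^[n] W + α) :=
      funext fun W => by rw [hG]
    rw [heq]
    exact differentiableOn_id.add
      (Complex.differentiableOn_tsum_of_summable_norm
        (hsumg.mul_left (N * Real.exp (2*Real.pi*(-Y₀ + α.im)))) htd hHopen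
        (fun n W hW => hub n W hW))
  -- (c) periodicity
  · intro W hW
    have hiter1 : ∀ n : ℕ, F^[n] (W + 1) = F^[n] W + 1 := by
      intro n
      induction n with
      | zero => simp
      | succ n ih =>
        rw [Function.iterate_succ_apply', Function.iterate_succ_apply', ih]
        have h1 : (F^[n] W).im < -Y₀ := (hkey W hW n).1
        have hVα : (F^[n] W + α).im < -Y₀ := by
          simp only [Complex.add_im]; linarith
        rw [hF (F^[n] W + 1), hF (F^[n] W)]
        have he : F^[n] W + 1 + α = (F^[n] W + α) + 1 := by ring
        rw [he, hper _ hVα]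
        ring
    have hGeq : G (W + 1) = G W := by
      rw [hG, hG]
      apply tsum_congr
      intro n
      rw [hiter1 n]
      have h1 : (F^[n] W).im < -Y₀ := (hkey W hW n).1
      have he : F^[n] W + 1 + α = (F^[n] W + α) + 1 := by ring
      rw [he, hper _ (by simp only [Complex.add_im]; linarith)]
    rw [hGeq]; ring
  -- (c) conjugation
  · intro W hW
    have hs : Summable (fun n : ℕ => Λ (F^[n] W + α)) := (hsumn W hW).of_norm
    have h0 : G W = Λ (W + α) + G (F W) := by
      rw [hG W, hG (F W), Summable.tsum_eq_zero_add hs]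
      simp only [Function.iterate_zero_apply, Function.iterate_succ_apply]
    rw [h0, hF W]
    ring
end

section
/- Let Y₀ ≥ 0 and N > 0 with N e^{−2πY₀} ≤ 1/2, and let Λ be holomorphic on {W ∈ ℂ : Im W < −Y₀} with Λ(W+1) = Λ(W) and |Λ(W)| ≤ N e^{2π Im W}. Set Ψ := id + Λ and let α ∈ ℂ with Im α ≥ 1, and F := T_α ∘ Ψ. Then: (a) Ψ is injective on {Im W < −Y₀ − 1} and its image contains {Im W < −Y₀ − 2}; (b) on H′ := {Im W < −Y₀ − 2} the inverse iterates F^{−n} (n ≥ 1) are well defined (using the inverse branch of Ψ taking values in {Im W < −Y₀ − 1}), map H′ into itself, and satisfy Im F^{−n}(W) ≤ Im W − n(Im α − 1/2); (c) the series G(W) := −Σ_{n ≥ 1} Λ(F^{−n}(W)) converges absolutely and uniformly on H′ with |G(W)| ≤ 2N e^{2π(Im W − Im α + 1)}; (d) the map H_* := id + G commutes with T₁ and satisfies H_* ∘ T_α ∘ Ψ = T_α ∘ H_* for all W with Im W < −Y₀ − 3 − Im α. -/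
open Filter Complex

/-- Backward telescopic-series construction of the Fatou–Glutsyuk normalization
`H_* = id + G`, `G = -Σ_{n≥1} Λ ∘ F^{-n}`, conjugating `T_α ∘ Ψ` (with `Ψ = id + Λ`,
`F = T_α ∘ Ψ`) to the translation `T_α`, in the sector where `Im α ≥ 1`. -/
theorem stmt_7 (Y₀ N : ℝ) (hY₀ : 0 ≤ Y₀) (hN : 0 < N)
    (hNY : N * Real.exp (-(2 * Real.pi * Y₀)) ≤ 1 / 2)
    (Λ : ℂ → ℂ)
    (hhol : DifferentiableOn ℂ Λ {W : ℂ | W.im < -Y₀})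
    (hper : ∀ W : ℂ, W.im < -Y₀ → Λ (W + 1) = Λ W)
    (hbound : ∀ W : ℂ, W.im < -Y₀ → ‖Λ W‖ ≤ N * Real.exp (2 * Real.pi * W.im))
    (α : ℂ) (hα : 1 ≤ α.im) :
    -- (a) `Ψ = id + Λ` is injective on `{Im W < -Y₀ - 1}` and its image contains
    -- `{Im W < -Y₀ - 2}`
    Set.InjOn (fun W => W + Λ W) {W : ℂ | W.im < -Y₀ - 1} ∧
    {W : ℂ | W.im < -Y₀ - 2} ⊆ (fun W => W + Λ W) '' {W : ℂ | W.im < -Y₀ - 1} ∧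
    -- the inverse branch `Finv` of `F = T_α ∘ Ψ` with values in `{Im W < -Y₀ - 1}`
    ∃ Finv : ℂ → ℂ,
      (∀ W : ℂ, W.im < -Y₀ - 2 →
        (Finv W).im < -Y₀ - 1 ∧ (Finv W + Λ (Finv W)) + α = W ∧
        (∀ V : ℂ, V.im < -Y₀ - 1 → (V + Λ V) + α = W → V = Finv W)) ∧
      -- (b) the inverse iterates map `H' = {Im W < -Y₀ - 2}` into itself and climb
      (∀ n : ℕ, 1 ≤ n → ∀ W : ℂ, W.im < -Y₀ - 2 →
        (Finv^[n] W).im < -Y₀ - 2 ∧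
        (Finv^[n] W).im ≤ W.im - n * (α.im - 1 / 2)) ∧
      -- (c) absolute and uniform convergence of the series defining `G`, and its bound
      (∀ W : ℂ, W.im < -Y₀ - 2 → Summable fun n : ℕ => ‖Λ (Finv^[n + 1] W)‖) ∧
      (∃ u : ℕ → ℝ, Summable u ∧
        ∀ (n : ℕ) (W : ℂ), W.im < -Y₀ - 2 → ‖Λ (Finv^[n + 1] W)‖ ≤ u n) ∧
      (∀ W : ℂ, W.im < -Y₀ - 2 →
        ‖-∑' n : ℕ, Λ (Finv^[n + 1] W)‖ ≤
          2 * N * Real.exp (2 * Real.pi * (W.im - α.im + 1))) ∧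
      -- (d) `H_* = id + G` commutes with `T₁` and conjugates `T_α ∘ Ψ` to `T_α`
      (∀ W : ℂ, W.im < -Y₀ - 2 →
        (W + 1) + -∑' n : ℕ, Λ (Finv^[n + 1] (W + 1)) =
          (W + -∑' n : ℕ, Λ (Finv^[n + 1] W)) + 1) ∧
      (∀ W : ℂ, W.im < -Y₀ - 3 - α.im →
        ((W + Λ W) + α) + -∑' n : ℕ, Λ (Finv^[n + 1] ((W + Λ W) + α)) =
          (W + -∑' n : ℕ, Λ (Finv^[n + 1] W)) + α) := by
  have hπ : (0 : ℝ) < Real.pi := Real.pi_pos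
  have hπ3 : (3 : ℝ) < Real.pi := Real.pi_gt_three
  set L : ℝ := Real.exp (-Real.pi) with hLdef
  have hL0 : 0 < L := Real.exp_pos _
  have hL1 : L < 1 := Real.exp_lt_one_iff.mpr (by linarith)
  have hLhalf : L ≤ 1 / 2 := by
    have h1 : L ≤ Real.exp (-1) := Real.exp_le_exp.mpr (by linarith)
    have h2 : (2 : ℝ) ≤ Real.exp 1 := by
      have := Real.exp_one_gt_d9; linarith
    have h3 : Real.exp (-1) ≤ 1 / 2 := by
      rw [Real.exp_neg]
      rw [inv_le_comm₀ (Real.exp_pos 1) (by norm_num)]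
      linarith
    linarith
  -- refined bound on Λ
  have hΛ : ∀ W : ℂ, W.im < -Y₀ → ‖Λ W‖ ≤ 1 / 2 * Real.exp (2 * Real.pi * (W.im + Y₀)) := by
    intro W hW
    have h1 := hbound W hW
    have e1 : 2 * Real.pi * W.im = -(2 * Real.pi * Y₀) + 2 * Real.pi * (W.im + Y₀) := by ring
    rw [e1, Real.exp_add, ← mul_assoc] at h1
    exact h1.trans (mul_le_mul_of_nonneg_right hNY (Real.exp_pos _).le)
  have hΛhalf : ∀ W : ℂ, W.im < -Y₀ → ‖Λ W‖ ≤ 1 / 2 := by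
    intro W hW
    refine (hΛ W hW).trans ?_
    have h1 : Real.exp (2 * Real.pi * (W.im + Y₀)) ≤ 1 :=
      Real.exp_le_one_iff.mpr (by nlinarith)
    linarith
  have him : ∀ W : ℂ, W.im < -Y₀ → |(Λ W).im| ≤ 1 / 2 := by
    intro W hW
    refine (Complex.abs_im_le_norm _).trans ?_
    exact hΛhalf W hW
  -- differentiability
  have hD : IsOpen {W : ℂ | W.im < -Y₀} := isOpen_lt Complex.continuous_im continuous_const
  have hdiffAt : ∀ z : ℂ, z.im < -Y₀ → DifferentiableAt ℂ Λ z := fun z hz =>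
    hhol.differentiableAt (hD.mem_nhds hz)
  -- Cauchy estimate on the derivative
  have hderiv : ∀ z : ℂ, z.im ≤ -Y₀ - 1 → ‖deriv Λ z‖ ≤ L := by
    intro z hz
    have hsub : Metric.closedBall z (1 / 2) ⊆ {W : ℂ | W.im < -Y₀} := by
      intro w hw
      have h1 : ‖w - z‖ ≤ 1 / 2 := mem_closedBall_iff_norm.mp hw
      have h2 : |w.im - z.im| ≤ 1 / 2 := by
        calc |w.im - z.im| = |(w - z).im| := by rw [Complex.sub_im]
          _ ≤ ‖w - z‖ := by exact Complex.abs_im_le_norm _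
          _ ≤ 1 / 2 := h1
      have h3 := (abs_le.mp h2).2
      simp only [Set.mem_setOf_eq]
      linarith
    have hdc : DiffContOnCl ℂ Λ (Metric.ball z (1 / 2)) := by
      have h1 : DifferentiableOn ℂ Λ (closure (Metric.ball z (1 / 2))) := by
        rw [closure_ball z (by norm_num : (1 / 2 : ℝ) ≠ 0)]
        exact hhol.mono hsub
      exact h1.diffContOnCl
    have hC : ∀ w ∈ Metric.sphere z (1 / 2), ‖Λ w‖ ≤ 1 / 2 * L := by
      intro w hw
      have h1 : ‖w - z‖ = 1 / 2 := mem_sphere_iff_norm.mp hw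
      have h2 : |w.im - z.im| ≤ 1 / 2 := by
        calc |w.im - z.im| = |(w - z).im| := by rw [Complex.sub_im]
          _ ≤ ‖w - z‖ := by exact Complex.abs_im_le_norm _
          _ = 1 / 2 := h1
      have h3 := (abs_le.mp h2).2
      have h4 : w.im < -Y₀ := by linarith
      refine (hΛ w h4).trans ?_
      have h5 : Real.exp (2 * Real.pi * (w.im + Y₀)) ≤ L := by
        rw [hLdef]
        exact Real.exp_le_exp.mpr (by nlinarith)
      nlinarith [Real.exp_pos (2 * Real.pi * (w.im + Y₀))]
    have := Complex.norm_deriv_le_of_forall_mem_sphere_norm_le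
      (by norm_num : (0 : ℝ) < 1 / 2) hdc hC
    calc ‖deriv Λ z‖ ≤ 1 / 2 * L / (1 / 2) := this
      _ = L := by ring
  -- Lipschitz estimate
  have hLip : ∀ a b : ℂ, a.im ≤ -Y₀ - 1 → b.im ≤ -Y₀ - 1 → ‖Λ b - Λ a‖ ≤ L * ‖b - a‖ := by
    intro a b ha hb
    have hconv : Convex ℝ {z : ℂ | z.im ≤ -Y₀ - 1} := convex_halfSpace_im_le _
    exact hconv.norm_image_sub_le_of_norm_deriv_le
      (fun x hx => hdiffAt x (lt_of_le_of_lt hx (by linarith)))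
      (fun x hx => hderiv x hx) ha hb
  -- (a) injectivity
  have hinj : Set.InjOn (fun W => W + Λ W) {W : ℂ | W.im < -Y₀ - 1} := by
    intro a ha b hb hab
    simp only [Set.mem_setOf_eq] at ha hb
    have h1 : Λ a - Λ b = b - a := by
      have : a + Λ a = b + Λ b := hab
      linear_combination this
    have h2 : ‖b - a‖ ≤ L * ‖b - a‖ := by
      calc ‖b - a‖ = ‖Λ a - Λ b‖ := (congrArg norm h1).symm
        _ ≤ L * ‖a - b‖ := hLip b a hb.le ha.le
        _ = L * ‖b - a‖ := by rw [norm_sub_rev]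
    have h3 : ‖b - a‖ = 0 := by nlinarith [norm_nonneg (b - a)]
    exact (sub_eq_zero.mp (norm_eq_zero.mp h3)).symm
  -- surjectivity via Banach fixed point
  have hsurj : ∀ W₀ : ℂ, W₀.im < -Y₀ - 2 → ∃ V : ℂ, V.im < -Y₀ - 1 ∧ V + Λ V = W₀ := by
    intro W₀ hW₀
    set f : ℂ → ℂ := fun V => W₀ - Λ V with hf
    set s : Set ℂ := Metric.closedBall W₀ (1 / 2) with hs
    have hmem : ∀ V ∈ s, V.im ≤ W₀.im + 1 / 2 := by
      intro V hV
      have h1 : ‖V - W₀‖ ≤ 1 / 2 := mem_closedBall_iff_norm.mp hV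
      have h2 : |V.im - W₀.im| ≤ 1 / 2 := by
        calc |V.im - W₀.im| = |(V - W₀).im| := by rw [Complex.sub_im]
          _ ≤ ‖V - W₀‖ := by exact Complex.abs_im_le_norm _
          _ ≤ 1 / 2 := h1
      linarith [(abs_le.mp h2).2]
    have hmem' : ∀ V ∈ s, V.im < -Y₀ - 1 := fun V hV => by linarith [hmem V hV]
    have hsf : Set.MapsTo f s s := by
      intro V hV
      have h1 : ‖f V - W₀‖ ≤ 1 / 2 := by
        have : f V - W₀ = -Λ V := by simp [hf]
        rw [this, norm_neg]
        exact hΛhalf V (by linarith [hmem' V hV])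
      exact mem_closedBall_iff_norm.mpr h1
    set K : NNReal := ⟨L, hL0.le⟩ with hK
    have hcontr : ContractingWith K (hsf.restrict f s s) := by
      constructor
      · exact_mod_cast hL1
      · apply LipschitzWith.of_dist_le_mul
        intro x y
        have hx := hmem' x x.2
        have hy := hmem' y y.2
        have h1 : dist (hsf.restrict f s s x) (hsf.restrict f s s y) = ‖Λ y.1 - Λ x.1‖ := by
          rw [Subtype.dist_eq]
          simp only [Set.MapsTo.val_restrict_apply, hf]
          rw [dist_eq_norm]
          congr 1
          ring
        rw [h1]
        have h2 := hLip (y : ℂ) (x : ℂ) hy.le hx.le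
        calc ‖Λ y.1 - Λ x.1‖ = ‖Λ x.1 - Λ y.1‖ := norm_sub_rev _ _
          _ ≤ L * ‖x.1 - y.1‖ := hLip y.1 x.1 hy.le hx.le
          _ = K * dist x y := by rw [Subtype.dist_eq, dist_eq_norm]; rfl
    obtain ⟨V, hVs, hVfix, -, -⟩ := ContractingWith.exists_fixedPoint'
      Metric.isClosed_closedBall.isComplete hsf hcontr
      (Metric.mem_closedBall_self (by norm_num)) (edist_ne_top _ _)
    refine ⟨V, hmem' V hVs, ?_⟩
    have : f V = V := hVfix
    simp only [hf] at this
    linear_combination -this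
  have himg : {W : ℂ | W.im < -Y₀ - 2} ⊆ (fun W => W + Λ W) '' {W : ℂ | W.im < -Y₀ - 1} := by
    intro W hW
    obtain ⟨V, h1, h2⟩ := hsurj W hW
    exact ⟨V, h1, h2⟩
  -- the inverse branch
  have hex : ∀ W : ℂ, ∃ V : ℂ, W.im < -Y₀ - 2 → V.im < -Y₀ - 1 ∧ (V + Λ V) + α = W := by
    intro W
    by_cases h : W.im < -Y₀ - 2
    · obtain ⟨V, h1, h2⟩ := hsurj (W - α) (by rw [Complex.sub_im]; linarith)
      exact ⟨V, fun _ => ⟨h1, by rw [h2]; ring⟩⟩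
    · exact ⟨0, fun hc => absurd hc h⟩
  choose Finv hFinv using hex
  have hFim : ∀ W : ℂ, W.im < -Y₀ - 2 → (Finv W).im < -Y₀ - 1 := fun W h => (hFinv W h).1
  have hFeq : ∀ W : ℂ, W.im < -Y₀ - 2 → (Finv W + Λ (Finv W)) + α = W := fun W h => (hFinv W h).2
  have huniq : ∀ W : ℂ, W.im < -Y₀ - 2 → ∀ V : ℂ, V.im < -Y₀ - 1 →
      (V + Λ V) + α = W → V = Finv W := by
    intro W hW V hV hVe
    refine hinj hV (hFim W hW) ?_
    have : (V + Λ V) + α = (Finv W + Λ (Finv W)) + α := hVe.trans (hFeq W hW).symm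
    simpa using add_right_cancel this
  -- one-step estimates
  have hstep : ∀ W : ℂ, W.im < -Y₀ - 2 → (Finv W).im ≤ W.im - (α.im - 1 / 2) := by
    intro W hW
    have h1 := congrArg Complex.im (hFeq W hW)
    simp only [Complex.add_im] at h1
    have h2 := (abs_le.mp (him (Finv W) (by linarith [hFim W hW]))).1
    linarith
  have hstep' : ∀ W : ℂ, W.im < -Y₀ - 2 → (Finv W).im < -Y₀ - 2 := by
    intro W hW
    have := hstep W hW
    linarith
  -- (b) iterates
  have hiter : ∀ n : ℕ, ∀ W : ℂ, W.im < -Y₀ - 2 →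
      (Finv^[n + 1] W).im < -Y₀ - 2 ∧
      (Finv^[n + 1] W).im ≤ W.im - ((n : ℝ) + 1) * (α.im - 1 / 2) := by
    intro n
    induction n with
    | zero =>
      intro W hW
      simp only [Nat.cast_zero, zero_add, Function.iterate_one]
      exact ⟨hstep' W hW, by linarith [hstep W hW]⟩
    | succ n ih =>
      intro W hW
      rw [Function.iterate_succ_apply]
      obtain ⟨h1, h2⟩ := ih (Finv W) (hstep' W hW)
      refine ⟨h1, ?_⟩
      have h3 := hstep W hW
      push_cast
      push_cast at h2
      nlinarith [hstep W hW]
  -- geometric bound on the terms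
  have hbnd : ∀ (n : ℕ) (W : ℂ), W.im < -Y₀ - 2 →
      ‖Λ (Finv^[n + 1] W)‖ ≤ N * Real.exp (2 * Real.pi * (W.im - α.im + 1 / 2)) * L ^ n := by
    intro n W hW
    obtain ⟨h1, h2⟩ := hiter n W hW
    have h3 := hbound _ (show (Finv^[n + 1] W).im < -Y₀ by linarith)
    refine h3.trans ?_
    have e1 : N * Real.exp (2 * Real.pi * (W.im - α.im + 1 / 2)) * L ^ n
        = N * Real.exp (2 * Real.pi * (W.im - α.im + 1 / 2) + (n : ℝ) * (-Real.pi)) := by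
      rw [Real.exp_add, hLdef, ← Real.exp_nat_mul, mul_assoc]
    rw [e1]
    refine mul_le_mul_of_nonneg_left (Real.exp_le_exp.mpr ?_) hN.le
    have hn0 : (0 : ℝ) ≤ (n : ℝ) := Nat.cast_nonneg n
    nlinarith [mul_le_mul_of_nonneg_left h2 (by positivity : (0 : ℝ) ≤ 2 * Real.pi),
      mul_nonneg (mul_nonneg hπ.le hn0) (by linarith : (0 : ℝ) ≤ α.im - 1)]
  have hgeom : ∀ c : ℝ, Summable (fun n : ℕ => c * L ^ n) :=
    fun c => (summable_geometric_of_lt_one hL0.le hL1).mul_left c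
  have hsum : ∀ W : ℂ, W.im < -Y₀ - 2 → Summable fun n : ℕ => ‖Λ (Finv^[n + 1] W)‖ := by
    intro W hW
    exact Summable.of_nonneg_of_le (fun n => norm_nonneg _) (fun n => hbnd n W hW)
      (hgeom (N * Real.exp (2 * Real.pi * (W.im - α.im + 1 / 2))))
  -- uniform bound
  have hu : ∃ u : ℕ → ℝ, Summable u ∧
      ∀ (n : ℕ) (W : ℂ), W.im < -Y₀ - 2 → ‖Λ (Finv^[n + 1] W)‖ ≤ u n := by
    refine ⟨fun n => N * Real.exp (2 * Real.pi * (-Y₀ - 2 - α.im + 1 / 2)) * L ^ n,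
      hgeom _, ?_⟩
    intro n W hW
    refine (hbnd n W hW).trans ?_
    show _ ≤ N * Real.exp (2 * Real.pi * (-Y₀ - 2 - α.im + 1 / 2)) * L ^ n
    have h1 : Real.exp (2 * Real.pi * (W.im - α.im + 1 / 2))
        ≤ Real.exp (2 * Real.pi * (-Y₀ - 2 - α.im + 1 / 2)) :=
      Real.exp_le_exp.mpr (by nlinarith)
    have h2 : (0 : ℝ) ≤ L ^ n := pow_nonneg hL0.le n
    exact mul_le_mul_of_nonneg_right (mul_le_mul_of_nonneg_left h1 hN.le) h2
  -- (c) bound on the sum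
  have hsumbound : ∀ W : ℂ, W.im < -Y₀ - 2 →
      ‖-∑' n : ℕ, Λ (Finv^[n + 1] W)‖ ≤ 2 * N * Real.exp (2 * Real.pi * (W.im - α.im + 1)) := by
    intro W hW
    rw [norm_neg]
    refine (norm_tsum_le_tsum_norm (hsum W hW)).trans ?_
    have h2 : ∑' n : ℕ, ‖Λ (Finv^[n + 1] W)‖
        ≤ ∑' n : ℕ, N * Real.exp (2 * Real.pi * (W.im - α.im + 1 / 2)) * L ^ n :=
      Summable.tsum_le_tsum (fun n => hbnd n W hW) (hsum W hW) (hgeom _)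
    refine h2.trans ?_
    rw [tsum_mul_left, tsum_geometric_of_lt_one hL0.le hL1]
    have hEE : Real.exp (2 * Real.pi * (W.im - α.im + 1 / 2))
        = Real.exp (2 * Real.pi * (W.im - α.im + 1)) * L := by
      rw [hLdef, ← Real.exp_add]
      congr 1
      ring
    rw [hEE]
    have hE : 0 < Real.exp (2 * Real.pi * (W.im - α.im + 1)) := Real.exp_pos _
    have hinv2 : (1 - L)⁻¹ ≤ 2 := by
      rw [inv_le_comm₀ (by linarith) (by norm_num)]
      linarith
    have h3 : L * (1 - L)⁻¹ ≤ 2 := by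
      have h4 : (0 : ℝ) ≤ (1 - L)⁻¹ := inv_nonneg.mpr (by linarith)
      nlinarith
    calc N * (Real.exp (2 * Real.pi * (W.im - α.im + 1)) * L) * (1 - L)⁻¹
        = (N * Real.exp (2 * Real.pi * (W.im - α.im + 1))) * (L * (1 - L)⁻¹) := by ring
      _ ≤ (N * Real.exp (2 * Real.pi * (W.im - α.im + 1))) * 2 :=
          mul_le_mul_of_nonneg_left h3 (mul_nonneg hN.le (Real.exp_pos _).le)
      _ = 2 * N * Real.exp (2 * Real.pi * (W.im - α.im + 1)) := by ring
  -- (d1) commutation with T₁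
  have hF1 : ∀ W : ℂ, W.im < -Y₀ - 2 → Finv (W + 1) = Finv W + 1 := by
    intro W hW
    have hW1 : (W + 1).im < -Y₀ - 2 := by
      simp only [Complex.add_im, Complex.one_im, add_zero]
      exact hW
    refine (huniq (W + 1) hW1 (Finv W + 1) ?_ ?_).symm
    · simp only [Complex.add_im, Complex.one_im, add_zero]
      exact hFim W hW
    · rw [hper (Finv W) (by linarith [hFim W hW])]
      linear_combination hFeq W hW
  have hFn : ∀ n : ℕ, ∀ W : ℂ, W.im < -Y₀ - 2 → Finv^[n] (W + 1) = Finv^[n] W + 1 := by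
    intro n
    induction n with
    | zero => intro W hW; simp
    | succ n ih =>
      intro W hW
      rw [Function.iterate_succ_apply, Function.iterate_succ_apply, hF1 W hW,
        ih (Finv W) (hstep' W hW)]
  have hcomm : ∀ W : ℂ, W.im < -Y₀ - 2 →
      (W + 1) + -∑' n : ℕ, Λ (Finv^[n + 1] (W + 1)) =
        (W + -∑' n : ℕ, Λ (Finv^[n + 1] W)) + 1 := by
    intro W hW
    have h1 : ∑' n : ℕ, Λ (Finv^[n + 1] (W + 1)) = ∑' n : ℕ, Λ (Finv^[n + 1] W) := by
      refine tsum_congr fun n => ?_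
      rw [hFn (n + 1) W hW, hper _ (by linarith [(hiter n W hW).1])]
    rw [h1]
    ring
  -- (d2) conjugation
  have hconj : ∀ W : ℂ, W.im < -Y₀ - 3 - α.im →
      ((W + Λ W) + α) + -∑' n : ℕ, Λ (Finv^[n + 1] ((W + Λ W) + α)) =
        (W + -∑' n : ℕ, Λ (Finv^[n + 1] W)) + α := by
    intro W hW
    have ha4 : W.im < -Y₀ - 4 := by linarith
    have hWH : W.im < -Y₀ - 2 := by linarith
    have hWim : (Λ W).im ≤ 1 / 2 := (abs_le.mp (him W (by linarith))).2
    have hW'2 : ((W + Λ W) + α).im < -Y₀ - 2 := by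
      simp only [Complex.add_im]
      linarith
    have hFW' : Finv ((W + Λ W) + α) = W := (huniq _ hW'2 W (by linarith) rfl).symm
    have hIt : ∀ n : ℕ, Finv^[n + 1] ((W + Λ W) + α) = Finv^[n] W := fun n => by
      rw [Function.iterate_succ_apply, hFW']
    have hsum1 : Summable fun n : ℕ => Λ (Finv^[n + 1] W) :=
      Summable.of_norm (hsum W hWH)
    have hsum0 : Summable fun n : ℕ => Λ (Finv^[n] W) :=
      (summable_nat_add_iff (f := fun n : ℕ => Λ (Finv^[n] W)) 1).mp hsum1
    have h0 : ∑' n : ℕ, Λ (Finv^[n + 1] ((W + Λ W) + α))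
        = Λ W + ∑' n : ℕ, Λ (Finv^[n + 1] W) := by
      calc ∑' n : ℕ, Λ (Finv^[n + 1] ((W + Λ W) + α)) = ∑' n : ℕ, Λ (Finv^[n] W) :=
            tsum_congr fun n => by rw [hIt n]
        _ = Λ (Finv^[0] W) + ∑' n : ℕ, Λ (Finv^[n + 1] W) := Summable.tsum_eq_zero_add hsum0
        _ = Λ W + ∑' n : ℕ, Λ (Finv^[n + 1] W) := by
            rw [Function.iterate_zero_apply]
    rw [h0]
    ring
  refine ⟨hinj, himg, Finv, ?_, ?_, hsum, hu, hsumbound, hcomm, hconj⟩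
  · intro W hW
    exact ⟨hFim W hW, hFeq W hW, fun V hV he => huniq W hW V hV he⟩
  · intro n hn W hW
    obtain ⟨m, rfl⟩ : ∃ m, n = m + 1 := ⟨n - 1, (Nat.succ_pred_eq_of_pos hn).symm⟩
    obtain ⟨h1, h2⟩ := hiter m W hW
    refine ⟨h1, ?_⟩
    push_cast
    exact h2
end

section
/- Let Y₀ ≥ 0 and N > 0 with N e^{−2πY₀} ≤ 1/2, let Λ be holomorphic on {W ∈ ℂ : Im W < −Y₀} with Λ(W+1) = Λ(W) and |Λ(W)| ≤ N e^{2π Im W}, set Ψ := id + Λ, and let α ∈ ℂ with Im α ≥ 1. Suppose H₁ and H₂ are holomorphic on {Im W < −Y₀}, commute with T₁, have H_i − id bounded, and satisfy the conjugacy equation H_i ∘ T_α ∘ Ψ = T_α ∘ H_i for all W with Im W < −Y₀ − 3 − Im α (i = 1, 2). Let c_i := lim_{Im W → −∞}(H_i(W) − W) (these limits exist). Then H₂ = T_{c₂ − c₁} ∘ H₁ on {Im W < −Y₀}; in particular the normalization H_i is unique up to left composition with a translation, and unique if one requires c_i = 0. -/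
open Filter Complex Set Metric

/-- Uniqueness up to left composition with a translation of the Fatou–Glutsyuk
normalizations: two solutions of `H ∘ T_α ∘ Ψ = T_α ∘ H` (with `Ψ = id + Λ`) that
commute with `T₁` and are bounded perturbations of the identity differ by the
translation `T_{c₂ - c₁}` of their asymptotic constants. -/
theorem stmt_8 (Y₀ N : ℝ) (hY₀ : 0 ≤ Y₀) (hN : 0 < N)
    (hNY : N * Real.exp (-(2 * Real.pi * Y₀)) ≤ 1 / 2)
    (Λ : ℂ → ℂ)
    (hhol : DifferentiableOn ℂ Λ {W : ℂ | W.im < -Y₀})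
    (hper : ∀ W : ℂ, W.im < -Y₀ → Λ (W + 1) = Λ W)
    (hbound : ∀ W : ℂ, W.im < -Y₀ → ‖Λ W‖ ≤ N * Real.exp (2 * Real.pi * W.im))
    (α : ℂ) (hα : 1 ≤ α.im)
    (H₁ H₂ : ℂ → ℂ) (c₁ c₂ : ℂ)
    (hhol₁ : DifferentiableOn ℂ H₁ {W : ℂ | W.im < -Y₀})
    (hhol₂ : DifferentiableOn ℂ H₂ {W : ℂ | W.im < -Y₀})
    (hcomm₁ : ∀ W : ℂ, W.im < -Y₀ → H₁ (W + 1) = H₁ W + 1)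
    (hcomm₂ : ∀ W : ℂ, W.im < -Y₀ → H₂ (W + 1) = H₂ W + 1)
    (hbdd₁ : ∃ M : ℝ, ∀ W : ℂ, W.im < -Y₀ → ‖H₁ W - W‖ ≤ M)
    (hbdd₂ : ∃ M : ℝ, ∀ W : ℂ, W.im < -Y₀ → ‖H₂ W - W‖ ≤ M)
    (hconj₁ : ∀ W : ℂ, W.im < -Y₀ - 3 - α.im → H₁ ((W + Λ W) + α) = H₁ W + α)
    (hconj₂ : ∀ W : ℂ, W.im < -Y₀ - 3 - α.im → H₂ ((W + Λ W) + α) = H₂ W + α)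
    (hc₁ : Tendsto (fun W : ℂ => H₁ W - W) (comap Complex.im atBot) (nhds c₁))
    (hc₂ : Tendsto (fun W : ℂ => H₂ W - W) (comap Complex.im atBot) (nhds c₂)) :
    (∀ W : ℂ, W.im < -Y₀ → H₂ W = H₁ W + (c₂ - c₁)) ∧
    (c₁ = c₂ → ∀ W : ℂ, W.im < -Y₀ → H₂ W = H₁ W) := by
  have hUopen : IsOpen {W : ℂ | W.im < -Y₀} := isOpen_Iio.preimage continuous_im
  -- Λ is bounded by 1/2 on the domain
  have hΛhalf : ∀ W : ℂ, W.im < -Y₀ → ‖Λ W‖ ≤ 1 / 2 := by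
    intro W hW
    refine (hbound W hW).trans (le_trans ?_ hNY)
    have : Real.exp (2 * Real.pi * W.im) ≤ Real.exp (-(2 * Real.pi * Y₀)) := by
      apply Real.exp_le_exp.2
      nlinarith [Real.pi_pos, hW]
    nlinarith [Real.exp_pos (2 * Real.pi * W.im)]
  -- derivative bound via Cauchy estimate
  have hderiv : ∀ x : ℂ, x.im ≤ -Y₀ - 2 → ‖deriv Λ x‖ ≤ 1 / 2 := by
    intro x hx
    have hball : closedBall x 1 ⊆ {W : ℂ | W.im < -Y₀} := by
      intro z hz
      have h1 : |z.im - x.im| ≤ 1 := by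
        have := Complex.abs_im_le_norm (z - x)
        simp only [mem_closedBall, Complex.dist_eq] at hz
        simpa [Complex.sub_im] using this.trans hz
      have h2 := abs_le.1 h1
      simp only [mem_setOf_eq]
      linarith [h2.1, h2.2]
    have hd : DiffContOnCl ℂ Λ (ball x 1) := by
      apply DifferentiableOn.diffContOnCl
      refine hhol.mono ?_
      refine subset_trans ?_ hball
      rw [closure_ball x one_ne_zero]
    have hC : ∀ z ∈ sphere x 1, ‖Λ z‖ ≤ N * Real.exp (2 * Real.pi * (x.im + 1)) := by
      intro z hz
      have hzU : z.im < -Y₀ := by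
        have := hball (sphere_subset_closedBall hz)
        exact this
      refine (hbound z hzU).trans ?_
      have h1 : |z.im - x.im| ≤ 1 := by
        have := Complex.abs_im_le_norm (z - x)
        simp only [mem_sphere_iff_norm] at hz
        simpa [Complex.sub_im] using this.trans_eq hz
      have hz1 : z.im ≤ x.im + 1 := by linarith [(abs_le.1 h1).2]
      have : Real.exp (2 * Real.pi * z.im) ≤ Real.exp (2 * Real.pi * (x.im + 1)) := by
        apply Real.exp_le_exp.2
        nlinarith [Real.pi_pos]
      nlinarith [Real.exp_pos (2 * Real.pi * z.im)]
    have := Complex.norm_deriv_le_of_forall_mem_sphere_norm_le one_pos hd hC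
    rw [div_one] at this
    refine this.trans ?_
    have h1 : N * Real.exp (2 * Real.pi * (x.im + 1)) ≤ N * Real.exp (-(2 * Real.pi * Y₀)) := by
      have : Real.exp (2 * Real.pi * (x.im + 1)) ≤ Real.exp (-(2 * Real.pi * Y₀)) := by
        apply Real.exp_le_exp.2
        nlinarith [Real.pi_pos]
      nlinarith
    linarith
  -- Lipschitz bound for Λ on a deep half-plane
  have hlip : ∀ z w : ℂ, z.im ≤ -Y₀ - 2 → w.im ≤ -Y₀ - 2 → ‖Λ z - Λ w‖ ≤ (1 / 2) * ‖z - w‖ := by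
    intro z w hz hw
    have hconv : Convex ℝ {c : ℂ | c.im ≤ -Y₀ - 2} := convex_halfSpace_im_le _
    refine hconv.norm_image_sub_le_of_norm_hasDerivWithin_le
      (f' := deriv Λ) (fun x hx => ?_) (fun x hx => hderiv x hx) hw hz
    have hx' : x.im ≤ -Y₀ - 2 := hx
    have hxU : x.im < -Y₀ := by linarith
    exact ((hhol.differentiableAt (hUopen.mem_nhds hxU)).hasDerivAt).hasDerivWithinAt
  -- existence of preimages under W ↦ W + Λ W + α
  have hpre : ∀ W₀ : ℂ, W₀.im ≤ -Y₀ - 4 →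
      ∃ W : ℂ, W.im ≤ W₀.im - 1 / 2 ∧ W.im < -Y₀ - 3 - α.im ∧ (W + Λ W) + α = W₀ := by
    intro W₀ hW₀
    set b : ℝ := W₀.im - α.im with hb
    have hble : b + 1 / 2 ≤ -Y₀ - 2 := by
      simp only [hb]; linarith
    set s : Set ℂ := {c : ℂ | c.im ≤ b + 1 / 2} with hs
    have hsc : IsComplete s := (isClosed_le continuous_im continuous_const).isComplete
    set φ : ℂ → ℂ := fun W => W₀ - α - Λ W with hφ
    have hmem : ∀ W ∈ s, (φ W).im ≤ b + 1 / 2 ∧ b - 1 / 2 ≤ (φ W).im := by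
      intro W hW
      have hWim : W.im ≤ -Y₀ - 2 := le_trans hW hble
      have hWU : W.im < -Y₀ := by linarith
      have hΛ : ‖Λ W‖ ≤ 1 / 2 := hΛhalf W hWU
      have hΛim : |(Λ W).im| ≤ 1 / 2 := le_trans (Complex.abs_im_le_norm _) hΛ
      have := abs_le.1 hΛim
      constructor <;> · simp only [hφ, Complex.sub_im, hb]; linarith [this.1, this.2]
    have hsf : MapsTo φ s s := fun W hW => (hmem W hW).1
    have hcontr : ContractingWith (1 / 2 : NNReal) (hsf.restrict φ s s) := by
      constructor
      · rw [← NNReal.coe_lt_coe]; norm_num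
      · refine hsf.lipschitzOnWith_iff_restrict.1 ?_
        apply LipschitzOnWith.of_dist_le_mul
        intro x hx y hy
        have hdx : dist (φ x) (φ y) = ‖Λ y - Λ x‖ := by
          simp only [hφ, Complex.dist_eq]
          congr 1
          ring
        rw [hdx, Complex.dist_eq]
        have := hlip y x (le_trans hy hble) (le_trans hx hble)
        calc ‖Λ y - Λ x‖ ≤ (1 / 2) * ‖y - x‖ := this
          _ = (1 / 2 : NNReal) * ‖x - y‖ := by rw [norm_sub_rev]; norm_num
    have hx₀ : (W₀ - α) ∈ s := by
      simp only [hs, mem_setOf_eq, Complex.sub_im, hb]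
      linarith
    obtain ⟨W, hWs, hWfix, -⟩ :=
      hcontr.exists_fixedPoint' hsc hsf hx₀ (edist_ne_top _ _)
    -- hWfix : φ W = W  (IsFixedPt)
    have hfix : W₀ - α - Λ W = W := hWfix
    have heq : (W + Λ W) + α = W₀ := by
      linear_combination -hfix
    have hWim : W.im ≤ b + 1 / 2 := hWs
    refine ⟨W, ?_, ?_, heq⟩
    · simp only [hb] at hWim; linarith
    · simp only [hb] at hWim; linarith
  -- iteration: push points arbitrarily deep while keeping H₂ - H₁ constant
  have hiter : ∀ n : ℕ, ∀ W₀ : ℂ, W₀.im ≤ -Y₀ - 4 →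
      ∃ W : ℂ, W.im ≤ W₀.im - n / 2 ∧ H₂ W - H₁ W = H₂ W₀ - H₁ W₀ := by
    intro n
    induction n with
    | zero => intro W₀ hW₀; exact ⟨W₀, by simp, rfl⟩
    | succ n ih =>
      intro W₀ hW₀
      obtain ⟨W, hWim, hWeq⟩ := ih W₀ hW₀
      obtain ⟨W', hW'im, hW'dom, hW'eq⟩ := hpre W (by linarith [Nat.cast_nonneg (α := ℝ) n])
      refine ⟨W', by push_cast; linarith, ?_⟩
      have h2 : H₂ W = H₂ W' + α := by rw [← hW'eq]; exact hconj₂ W' hW'dom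
      have h1 : H₁ W = H₁ W' + α := by rw [← hW'eq]; exact hconj₁ W' hW'dom
      rw [← hWeq, h1, h2]; ring
  -- the limit of H₂ - H₁
  have hlim : Tendsto (fun W : ℂ => H₂ W - H₁ W) (comap Complex.im atBot) (nhds (c₂ - c₁)) := by
    have := hc₂.sub hc₁
    simpa using this
  -- H₂ - H₁ is constant on the deep half-plane
  have hzero : ∀ W₀ : ℂ, W₀.im ≤ -Y₀ - 4 → H₂ W₀ - H₁ W₀ = c₂ - c₁ := by
    intro W₀ hW₀
    apply eq_of_forall_dist_le
    intro ε hε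
    have hev : ∀ᶠ W : ℂ in comap Complex.im atBot,
        dist (H₂ W - H₁ W) (c₂ - c₁) < ε := hlim (ball_mem_nhds _ hε)
    rw [eventually_comap] at hev
    obtain ⟨A, hA⟩ := eventually_atBot.1 hev
    obtain ⟨n, hn⟩ := exists_nat_ge ((W₀.im - A) * 2)
    obtain ⟨W, hWim, hWeq⟩ := hiter n W₀ hW₀
    have hWA : W.im ≤ A := by linarith
    have := hA W.im hWA W rfl
    rw [hWeq] at this
    exact this.le
  -- identity theorem
  have hUconn : IsPreconnected {W : ℂ | W.im < -Y₀} := (convex_halfSpace_im_lt _).isPreconnected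
  have hfan : AnalyticOnNhd ℂ (fun W => H₂ W - H₁ W - (c₂ - c₁)) {W : ℂ | W.im < -Y₀} :=
    ((hhol₂.sub hhol₁).sub_const _).analyticOnNhd hUopen
  have hz₀mem : ((-Y₀ - 5 : ℝ) * I : ℂ) ∈ {W : ℂ | W.im < -Y₀} := by
    simp only [mem_setOf_eq, Complex.mul_im, Complex.ofReal_re, Complex.I_im, Complex.ofReal_im,
      Complex.I_re]
    norm_num
  have hev0 : (fun W => H₂ W - H₁ W - (c₂ - c₁)) =ᶠ[nhds ((-Y₀ - 5 : ℝ) * I : ℂ)] 0 := by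
    have hVopen : IsOpen {W : ℂ | W.im < -Y₀ - 4} := isOpen_Iio.preimage continuous_im
    have hz₀V : ((-Y₀ - 5 : ℝ) * I : ℂ) ∈ {W : ℂ | W.im < -Y₀ - 4} := by
      simp only [mem_setOf_eq, Complex.mul_im, Complex.ofReal_re, Complex.I_im, Complex.ofReal_im,
        Complex.I_re]
      norm_num
    filter_upwards [hVopen.mem_nhds hz₀V] with W hW
    have := hzero W (le_of_lt hW)
    simp [this]
  have hEq := hfan.eqOn_zero_of_preconnected_of_eventuallyEq_zero hUconn hz₀mem hev0
  constructor
  · intro W hW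
    have := hEq hW
    simp only [Pi.zero_apply] at this
    linear_combination this
  · intro hc W hW
    have := hEq hW
    simp only [Pi.zero_apply] at this
    rw [hc] at this
    linear_combination this
end

section
/- Let a ∈ ℂ, Y₀ ≥ 1, N > 0 with N e^{−2πY₀} ≤ 1/2, and δ ∈ (0,1]. Let Ψ̄ and Ψ̃ be holomorphic on {W : Im W > Y₀}, commuting with T₁, with |Ψ̄(W) − W + 2πia| ≤ N e^{−2π Im W} and |Ψ̃(W) − W + 2πia| ≤ N e^{−2π Im W} there. Suppose there are holomorphic maps P̃ and P̄ on {W : Im W > Y₀ + 1} and a constant D′ ∈ ℂ such that, for all W with Im W > Y₀ + 1 + 2π|a|: |P̃(W) − Ψ̃(W) − 2πia| ≤ δ, |P̄(W) − Ψ̄(W + 2πia)| ≤ δ, |D′ + 2πia| ≤ δ, and P̃(W) = P̄(W + D′) + 2πia. Then |Ψ̄(W) − Ψ̃(W)| ≤ 4δ for all W with Im W > Y₀ + 2 + 4π|a|. -/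
open Filter Complex

/-- Key step of the flatness theorem: if the two representatives `P̃` and `P̄` of the
common Glutsyuk modulus are `δ`-close to `Ψ̃ + 2πia` and `Ψ̄ ∘ T_{2πia}` respectively,
and satisfy the compatibility condition `P̃ = T_{2πia} ∘ P̄ ∘ T_{D'}` with
`D' = -2πia + O(δ)`, then the two presentations `Ψ̄`, `Ψ̃` of the modulus are
`4δ`-close. -/
theorem stmt_9 (a : ℂ) (Y₀ N δ : ℝ) (hY₀ : 1 ≤ Y₀) (hN : 0 < N)
    (hNY : N * Real.exp (-(2 * Real.pi * Y₀)) ≤ 1 / 2)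
    (hδ : 0 < δ) (hδ1 : δ ≤ 1)
    (Ψb Ψt : ℂ → ℂ)
    (hholb : DifferentiableOn ℂ Ψb {W : ℂ | Y₀ < W.im})
    (hholt : DifferentiableOn ℂ Ψt {W : ℂ | Y₀ < W.im})
    (hcommb : ∀ W : ℂ, Y₀ < W.im → Ψb (W + 1) = Ψb W + 1)
    (hcommt : ∀ W : ℂ, Y₀ < W.im → Ψt (W + 1) = Ψt W + 1)
    (hboundb : ∀ W : ℂ, Y₀ < W.im →
      ‖Ψb W - W + 2 * Real.pi * Complex.I * a‖ ≤ N * Real.exp (-(2 * Real.pi * W.im)))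
    (hboundt : ∀ W : ℂ, Y₀ < W.im →
      ‖Ψt W - W + 2 * Real.pi * Complex.I * a‖ ≤ N * Real.exp (-(2 * Real.pi * W.im)))
    (Pt Pb : ℂ → ℂ) (D' : ℂ)
    (hholPt : DifferentiableOn ℂ Pt {W : ℂ | Y₀ + 1 < W.im})
    (hholPb : DifferentiableOn ℂ Pb {W : ℂ | Y₀ + 1 < W.im})
    (hPt : ∀ W : ℂ, Y₀ + 1 + 2 * Real.pi * ‖a‖ < W.im →
      ‖Pt W - Ψt W - 2 * Real.pi * Complex.I * a‖ ≤ δ)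
    (hPb : ∀ W : ℂ, Y₀ + 1 + 2 * Real.pi * ‖a‖ < W.im →
      ‖Pb W - Ψb (W + 2 * Real.pi * Complex.I * a)‖ ≤ δ)
    (hD : ‖D' + 2 * Real.pi * Complex.I * a‖ ≤ δ)
    (hcomp : ∀ W : ℂ, Y₀ + 1 + 2 * Real.pi * ‖a‖ < W.im →
      Pt W = Pb (W + D') + 2 * Real.pi * Complex.I * a) :
    ∀ W : ℂ, Y₀ + 2 + 4 * Real.pi * ‖a‖ < W.im →
      ‖Ψb W - Ψt W‖ ≤ 4 * δ := by
  intro W hW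
  have hπ : (0:ℝ) < Real.pi := Real.pi_pos
  have ha0 : (0:ℝ) ≤ ‖a‖ := norm_nonneg a
  set c : ℂ := 2 * Real.pi * Complex.I * a with hc
  set ε : ℂ := D' + c with hε
  have hεδ : ‖ε‖ ≤ δ := hD
  have hεim : |ε.im| ≤ δ :=
    le_trans (by simpa using Complex.abs_im_le_norm ε) hεδ
  have hεim' := abs_le.mp hεim
  have hare := abs_le.mp (Complex.abs_re_le_norm a)
  have hcim : c.im = 2 * Real.pi * a.re := by
    simp [hc, Complex.mul_im, Complex.mul_re]
  -- membership facts
  have him1 : Y₀ + 1 + 2 * Real.pi * ‖a‖ < W.im := by nlinarith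
  have hD'eq : D' = ε - c := by rw [hε]; ring
  have hD'im : D'.im = ε.im - 2 * Real.pi * a.re := by
    rw [hD'eq, Complex.sub_im, hcim]
  have him2 : Y₀ + 1 + 2 * Real.pi * ‖a‖ < (W + D').im := by
    rw [Complex.add_im, hD'im]; nlinarith
  have h1 := hPt W him1
  have h2 := hPb (W + D') him2
  have h3 := hcomp W him1
  have hWDc : W + D' + c = W + ε := by rw [hε]; ring
  rw [hWDc] at h2
  -- differentiability of the flat part
  have hopen : IsOpen {z : ℂ | Y₀ < z.im} :=
    isOpen_lt continuous_const Complex.continuous_im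
  have hdiff : DifferentiableOn ℂ (fun z => Ψb z - z + c) {z : ℂ | Y₀ < z.im} :=
    (hholb.sub differentiableOn_id).add_const c
  have hrb_bound : ∀ z : ℂ, Y₀ < z.im → ‖Ψb z - z + c‖ ≤ 1 / 2 := by
    intro z hz
    have h := hboundb z hz
    have hexp : Real.exp (-(2 * Real.pi * z.im)) ≤ Real.exp (-(2 * Real.pi * Y₀)) := by
      apply Real.exp_le_exp.mpr; nlinarith
    calc ‖Ψb z - z + c‖ ≤ N * Real.exp (-(2 * Real.pi * z.im)) := h
      _ ≤ N * Real.exp (-(2 * Real.pi * Y₀)) := by nlinarith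
      _ ≤ 1 / 2 := hNY
  -- Cauchy estimate for the derivative
  have hderiv : ∀ x ∈ {z : ℂ | Y₀ + 1/2 < z.im},
      ‖deriv (fun z => Ψb z - z + c) x‖ ≤ 1 := by
    intro x hx
    simp only [Set.mem_setOf_eq] at hx
    have hsub : Metric.closedBall x (1/2) ⊆ {z : ℂ | Y₀ < z.im} := by
      intro z hz
      rw [Metric.mem_closedBall, Complex.dist_eq] at hz
      have him : |(z - x).im| ≤ ‖z - x‖ := Complex.abs_im_le_norm _
      have h' : (z - x).im = z.im - x.im := by simp
      rw [h'] at him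
      have := (abs_le.mp (him.trans hz)).1
      simp only [Set.mem_setOf_eq]
      linarith
    have hdcl : DiffContOnCl ℂ (fun z => Ψb z - z + c) (Metric.ball x (1/2)) := by
      apply DifferentiableOn.diffContOnCl
      apply hdiff.mono
      rwa [closure_ball x (by norm_num : (1/2:ℝ) ≠ 0)]
    have hsph : ∀ z ∈ Metric.sphere x (1/2), ‖Ψb z - z + c‖ ≤ 1/2 := by
      intro z hz
      exact hrb_bound z (hsub (Metric.sphere_subset_closedBall hz))
    have hd := Complex.norm_deriv_le_of_forall_mem_sphere_norm_le
      (by norm_num : (0:ℝ) < 1/2) hdcl hsph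
    calc ‖deriv (fun z => Ψb z - z + c) x‖ ≤ (1/2) / (1/2) := hd
      _ = 1 := by norm_num
  -- mean value estimate
  have hconv : Convex ℝ {z : ℂ | Y₀ + 1/2 < z.im} := convex_halfSpace_im_gt _
  have hdiffAt : ∀ x ∈ {z : ℂ | Y₀ + 1/2 < z.im},
      DifferentiableAt ℂ (fun z => Ψb z - z + c) x := by
    intro x hx
    simp only [Set.mem_setOf_eq] at hx
    exact hdiff.differentiableAt (hopen.mem_nhds (by simp only [Set.mem_setOf_eq]; linarith))
  have hWmem : W ∈ {z : ℂ | Y₀ + 1/2 < z.im} := by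
    simp only [Set.mem_setOf_eq]; nlinarith
  have hWεmem : W + ε ∈ {z : ℂ | Y₀ + 1/2 < z.im} := by
    simp only [Set.mem_setOf_eq, Complex.add_im]; nlinarith
  have hmv := Convex.norm_image_sub_le_of_norm_deriv_le hdiffAt hderiv hconv hWmem hWεmem
  have n1 : ‖(Ψb W - W + c) - (Ψb (W + ε) - (W + ε) + c)‖ ≤ δ := by
    rw [norm_sub_rev]
    calc ‖(Ψb (W + ε) - (W + ε) + c) - (Ψb W - W + c)‖ ≤ 1 * ‖W + ε - W‖ := hmv
      _ = ‖ε‖ := by rw [one_mul, add_sub_cancel_left]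
      _ ≤ δ := hεδ
  -- key algebraic identity
  have key : Ψb W - Ψt W =
      ((Ψb W - W + c) - (Ψb (W + ε) - (W + ε) + c)) - ε
        + (Pt W - Ψt W - c) - (Pb (W + D') - Ψb (W + ε)) := by
    linear_combination -h3
  rw [key]
  have t1 := norm_sub_le
    (((Ψb W - W + c) - (Ψb (W + ε) - (W + ε) + c)) - ε + (Pt W - Ψt W - c))
    (Pb (W + D') - Ψb (W + ε))
  have t2 := norm_add_le (((Ψb W - W + c) - (Ψb (W + ε) - (W + ε) + c)) - ε)
    (Pt W - Ψt W - c)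
  have t3 := norm_sub_le ((Ψb W - W + c) - (Ψb (W + ε) - (W + ε) + c)) ε
  linarith
end

section
/- For an integer n ≥ 1 and z ∈ ℂ \ {0}, let z^{1/n} := exp((1/n)·Log z) be the principal n-th root, and for A ∈ ℂ let m_{A,n}(w) := w·(1 + A wⁿ)^{−1/n}. (a) Let C̃, Ã ∈ ℂ with C̃ⁿ ≠ 1 and set d̃ := Ã/(1 − C̃ⁿ). Then there exists δ > 0 such that for all w with |w| < δ one has m_{d̃,n}(C̃ · m_{Ã,n}(w)) = C̃ · m_{d̃,n}(w). (b) Let C̄, Ā ∈ ℂ with C̄ⁿ ≠ 1 and set d̄ := Ā C̄ⁿ/(1 − C̄ⁿ). Then there exists δ > 0 such that for all w with |w| < δ one has m_{d̄,n}(m_{Ā,n}(C̄ w)) = C̄ · m_{d̄,n}(w). -/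
open Complex

/-- `m_{A,n}(w) = w (1 + A wⁿ)^{-1/n}`, with the principal branch
`z^{1/n} = exp ((1/n) Log z)`. -/
noncomputable def mmap (n : ℕ) (A : ℂ) (w : ℂ) : ℂ :=
  w * Complex.exp (-(1 / (n : ℂ)) * Complex.log (1 + A * w ^ n))

lemma re_pos_of_abs_sub_one_lt {z : ℂ} (h : ‖z - 1‖ < 1) : 0 < z.re := by
  have h1 : |(z - 1).re| ≤ ‖z - 1‖ := Complex.abs_re_le_norm _
  have h2 : (z - 1).re = z.re - 1 := by simp
  rw [h2] at h1
  have := abs_lt.mp (lt_of_le_of_lt h1 h)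
  linarith [this.1]

lemma ne_zero_of_abs_sub_one_lt {z : ℂ} (h : ‖z - 1‖ < 1) : z ≠ 0 := by
  intro hz
  simp [hz] at h

lemma key_lemma (n : ℕ) (hn : 1 ≤ n) (C A d : ℂ) (hd : A + d * C ^ n = d) :
    ∃ δ : ℝ, 0 < δ ∧ ∀ w : ℂ, ‖w‖ < δ →
      mmap n d (C * mmap n A w) = C * mmap n d w := by
  set M : ℝ := max (‖A‖) (‖d‖) with hM
  have hM0 : 0 ≤ M := le_trans (norm_nonneg A) (le_max_left _ _)
  refine ⟨min 1 (1 / (4 * (M + 1))), by positivity, ?_⟩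
  intro w hw
  have hw1 : ‖w‖ < 1 := lt_of_lt_of_le hw (min_le_left _ _)
  have hw2 : ‖w‖ < 1 / (4 * (M + 1)) := lt_of_lt_of_le hw (min_le_right _ _)
  have hwn : ‖w ^ n‖ ≤ ‖w‖ := by
    rw [norm_pow]
    calc ‖w‖ ^ n ≤ ‖w‖ ^ 1 :=
          pow_le_pow_of_le_one (norm_nonneg w) hw1.le hn
      _ = ‖w‖ := pow_one _
  have hwn' : ‖w ^ n‖ < 1 / (4 * (M + 1)) := lt_of_le_of_lt hwn hw2
  have hbound : ∀ E : ℂ, ‖E‖ ≤ M → ‖E * w ^ n‖ < 1 / 4 := by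
    intro E hE
    rw [norm_mul]
    have h1 : ‖E‖ * ‖w ^ n‖ ≤ M * (1 / (4 * (M + 1))) := by
      apply mul_le_mul hE hwn'.le (norm_nonneg _) hM0
    have h2 : M * (1 / (4 * (M + 1))) < 1 / 4 := by
      rw [mul_one_div, div_lt_div_iff₀ (by positivity) (by norm_num : (0:ℝ) < 4)]
      nlinarith
    linarith
  have hA4 : ‖A * w ^ n‖ < 1 / 4 := hbound A (le_max_left _ _)
  have hd4 : ‖d * w ^ n‖ < 1 / 4 := hbound d (le_max_right _ _)
  set a : ℂ := 1 + A * w ^ n with ha_def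
  set b : ℂ := 1 + d * w ^ n with hb_def
  have ha1 : ‖a - 1‖ < 1 / 4 := by
    simpa [ha_def] using hA4
  have hb1 : ‖b - 1‖ < 1 / 4 := by
    simpa [hb_def] using hd4
  have ha0 : a ≠ 0 := ne_zero_of_abs_sub_one_lt (by linarith)
  have hb0 : b ≠ 0 := ne_zero_of_abs_sub_one_lt (by linarith)
  have haabs : (3 : ℝ) / 4 < ‖a‖ := by
    have h := norm_sub_norm_le (1 : ℂ) a
    rw [norm_sub_rev] at h
    simp only [norm_one] at h
    linarith
  have hba1 : ‖b / a - 1‖ < 1 := by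
    have hsub : b / a - 1 = (b - a) / a := by field_simp
    rw [hsub, norm_div]
    have hba : ‖b - a‖ ≤ 1 / 2 := by
      have : b - a = d * w ^ n - A * w ^ n := by rw [ha_def, hb_def]; ring
      rw [this]
      calc ‖d * w ^ n - A * w ^ n‖
          ≤ ‖d * w ^ n‖ + ‖A * w ^ n‖ := norm_sub_le _ _
        _ ≤ 1 / 2 := by linarith
    rw [div_lt_one (by linarith)]
    linarith
  have hba0 : b / a ≠ 0 := div_ne_zero hb0 ha0
  -- positivity of real parts, hence small args
  have hra : 0 < a.re := re_pos_of_abs_sub_one_lt (by linarith)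
  have hrba : 0 < (b / a).re := re_pos_of_abs_sub_one_lt hba1
  have harga : |Complex.arg a| < Real.pi / 2 :=
    Complex.abs_arg_lt_pi_div_two_iff.mpr (Or.inl hra)
  have hargba : |Complex.arg (b / a)| < Real.pi / 2 :=
    Complex.abs_arg_lt_pi_div_two_iff.mpr (Or.inl hrba)
  have hlog : Complex.log a + Complex.log (b / a) = Complex.log b := by
    have hmul : a * (b / a) = b := by field_simp
    have := Complex.log_mul ha0 hba0 ?_
    · rw [hmul] at this; exact this.symm
    · constructor
      · have := abs_lt.mp harga
        have := abs_lt.mp hargba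
        linarith [Real.pi_pos]
      · have := abs_lt.mp harga
        have := abs_lt.mp hargba
        linarith [Real.pi_pos]
  -- compute the n-th power
  have hncast : (n : ℂ) ≠ 0 := Nat.cast_ne_zero.mpr (by omega)
  have h1 : (C * mmap n A w) ^ n = C ^ n * w ^ n / a := by
    rw [mmap, mul_pow, mul_pow, ← Complex.exp_nat_mul]
    have : (n : ℂ) * (-(1 / (n : ℂ)) * Complex.log a) = -Complex.log a := by
      field_simp
    rw [this, Complex.exp_neg, Complex.exp_log ha0]
    ring
  have h2 : 1 + d * (C * mmap n A w) ^ n = b / a := by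
    rw [h1, eq_div_iff ha0, add_mul, mul_div_assoc', div_mul_cancel₀ _ ha0, ha_def, hb_def]
    linear_combination w ^ n * hd
  -- assemble
  have hexp : Complex.exp (-(1 / (n : ℂ)) * Complex.log a) *
      Complex.exp (-(1 / (n : ℂ)) * Complex.log (b / a)) =
      Complex.exp (-(1 / (n : ℂ)) * Complex.log b) := by
    rw [← Complex.exp_add]
    congr 1
    rw [← hlog]
    ring
  calc mmap n d (C * mmap n A w)
      = (C * mmap n A w) * Complex.exp (-(1 / (n : ℂ)) * Complex.log (b / a)) := by
        rw [mmap, h2]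
    _ = C * (w * (Complex.exp (-(1 / (n : ℂ)) * Complex.log a) *
          Complex.exp (-(1 / (n : ℂ)) * Complex.log (b / a)))) := by
        rw [mmap]; ring
    _ = C * mmap n d w := by rw [hexp, mmap]

lemma mmap_shift (n : ℕ) (A C w : ℂ) :
    mmap n A (C * w) = C * mmap n (A * C ^ n) w := by
  rw [mmap, mmap, mul_pow]
  ring_nf

/-- The explicit linearizing maps of the renormalized return maps:
(a) `h̃⁰ = m_{d̃,n}` with `d̃ = Ã/(1 - C̃ⁿ)` solves `h ∘ L_{C̃} ∘ m_{Ã,n} = L_{C̃} ∘ h`;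
(b) `h̄⁰ = m_{d̄,n}` with `d̄ = Ā C̄ⁿ/(1 - C̄ⁿ)` solves `h ∘ m_{Ā,n} ∘ L_{C̄} = L_{C̄} ∘ h`,
near the origin. -/
theorem stmt_12 (n : ℕ) (hn : 1 ≤ n) :
    (∀ Ct At : ℂ, Ct ^ n ≠ 1 →
      ∃ δ : ℝ, 0 < δ ∧ ∀ w : ℂ, ‖w‖ < δ →
        mmap n (At / (1 - Ct ^ n)) (Ct * mmap n At w) =
          Ct * mmap n (At / (1 - Ct ^ n)) w) ∧
    (∀ Cb Ab : ℂ, Cb ^ n ≠ 1 →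
      ∃ δ : ℝ, 0 < δ ∧ ∀ w : ℂ, ‖w‖ < δ →
        mmap n (Ab * Cb ^ n / (1 - Cb ^ n)) (mmap n Ab (Cb * w)) =
          Cb * mmap n (Ab * Cb ^ n / (1 - Cb ^ n)) w) := by
  constructor
  · intro Ct At hC
    have hsub : (1 : ℂ) - Ct ^ n ≠ 0 := sub_ne_zero.mpr (Ne.symm hC)
    apply key_lemma n hn
    field_simp
    ring
  · intro Cb Ab hC
    have hsub : (1 : ℂ) - Cb ^ n ≠ 0 := sub_ne_zero.mpr (Ne.symm hC)
    obtain ⟨δ, hδ, h⟩ := key_lemma n hn Cb (Ab * Cb ^ n)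
      (Ab * Cb ^ n / (1 - Cb ^ n)) (by field_simp; ring)
    refine ⟨δ, hδ, fun w hw => ?_⟩
    rw [mmap_shift n Ab Cb w]
    exact h w hw
end

section
/- Let n ≥ 1 be an integer and let d̄, ē, d̃, ẽ, F, G ∈ ℂ with d̄ ē ≠ 1 satisfy the system: 1 − d̃ ẽ = Fⁿ Gⁿ/(1 − d̄ ē), ẽ = −Fⁿ ē/(1 − d̄ ē), and d̃ = −Gⁿ d̄/(1 − d̄ ē). Then d̃ ẽ = d̄ ē and Fⁿ Gⁿ = (1 − d̄ ē)². Moreover, suppose C̄, C̃, β ∈ ℂ \ {0} with β = (C̄ C̃)^{−1}, C̄ⁿ ≠ 1 and C̃ⁿ ≠ 1, and suppose d̃ = Ã/(1 − C̃ⁿ), ẽ = B̃/(1 − C̄ⁿ), d̄ = Ā C̄ⁿ/(1 − C̄ⁿ) and ē = (C̃ β)ⁿ B̄/(1 − C̃ⁿ) for some Ã, B̃, Ā, B̄ ∈ ℂ. Then d̃ ẽ = d̄ ē holds if and only if Ã B̃ = Ā B̄. -/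
/-- Algebraic content of the compatibility condition for moduli of the form
`(m_{A,n}, L_β ∘ T_{B,n})`: the system expressing
`T_{ẽ,n} ∘ m_{-d̃,n} = L_{FG} ∘ m_{Gⁿd̄,n} ∘ T_{-ē/Gⁿ,n}` forces `d̃ẽ = d̄ē` and
`FⁿGⁿ = (1 - d̄ē)²`; moreover, with the explicit values of `d̃, ẽ, d̄, ē`, the
relation `d̃ẽ = d̄ē` is equivalent to `ÃB̃ = ĀB̄`. -/
theorem stmt_13 (n : ℕ) (hn : 1 ≤ n) (db eb dt et F G : ℂ)
    (hde : db * eb ≠ 1)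
    (h1 : 1 - dt * et = F ^ n * G ^ n / (1 - db * eb))
    (h2 : et = -(F ^ n * eb) / (1 - db * eb))
    (h3 : dt = -(G ^ n * db) / (1 - db * eb)) :
    (dt * et = db * eb ∧ F ^ n * G ^ n = (1 - db * eb) ^ 2) ∧
    (∀ Cb Ct β At Bt Ab Bb : ℂ,
      Cb ≠ 0 → Ct ≠ 0 → β ≠ 0 → β = (Cb * Ct)⁻¹ → Cb ^ n ≠ 1 → Ct ^ n ≠ 1 →
      dt = At / (1 - Ct ^ n) → et = Bt / (1 - Cb ^ n) →
      db = Ab * Cb ^ n / (1 - Cb ^ n) → eb = (Ct * β) ^ n * Bb / (1 - Ct ^ n) →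
      (dt * et = db * eb ↔ At * Bt = Ab * Bb)) := by
  have hne : (1 : ℂ) - db * eb ≠ 0 := by
    intro h; apply hde; linear_combination -h
  have h1' : (1 - dt * et) * (1 - db * eb) = F ^ n * G ^ n := by
    rw [h1]; field_simp
  have hP : dt * et * (1 - db * eb) ^ 2 = F ^ n * G ^ n * (db * eb) := by
    rw [h2, h3]; field_simp
  have hFG : F ^ n * G ^ n = (1 - db * eb) ^ 2 := by
    linear_combination (-(1 - db * eb)) * h1' - hP
  have hdtet : dt * et = db * eb := by
    rw [hFG] at hP
    have := mul_right_cancel₀ (pow_ne_zero 2 hne) (by linear_combination hP :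
      dt * et * (1 - db * eb) ^ 2 = db * eb * (1 - db * eb) ^ 2)
    exact this
  refine ⟨⟨hdtet, hFG⟩, ?_⟩
  intro Cb Ct β At Bt Ab Bb hCb hCt hβ hβeq hCbn hCtn hdt het hdb heb
  have hct : (1 : ℂ) - Ct ^ n ≠ 0 := fun h => hCtn (by linear_combination -h)
  have hcb : (1 : ℂ) - Cb ^ n ≠ 0 := fun h => hCbn (by linear_combination -h)
  rw [hdt, het, hdb, heb, hβeq]
  have hkey : (Ct * (Cb * Ct)⁻¹) ^ n = (Cb ^ n)⁻¹ := by
    rw [mul_inv, ← mul_assoc, mul_comm Ct Cb⁻¹, mul_assoc, mul_inv_cancel₀ hCt,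
      mul_one, inv_pow]
  rw [hkey]
  constructor <;> intro h
  · field_simp at h
    have hz : Cb ^ n * ((1 - Cb ^ n) * (1 - Ct ^ n)) ≠ 0 :=
      mul_ne_zero (pow_ne_zero n hCb) (mul_ne_zero hcb hct)
    apply mul_right_cancel₀ hz
    linear_combination (Cb ^ n * ((1 - Cb ^ n) * (1 - Ct ^ n))) * h
  · field_simp
    linear_combination h
end

section
/- Let n ≥ 1 be an integer, A ∈ ℂ, and C, β, F ∈ ℂ \ {0} with Cⁿ ≠ 1 and Fⁿ = ((Cβ)ⁿ − 1)/(βⁿ(Cⁿ − 1)) (equivalently, Fⁿ = ((Cβ)^{−n} − 1)/(C^{−n} − 1)). Let m_{A,n}(w) := w·(1 + A wⁿ)^{−1/n} with the principal n-th root z^{1/n} := exp((1/n)·Log z). Then h := m_{A,n} satisfies the functional equation h(F C^{−1} · h(Cβ w)) = C^{−1} · h(F Cβ · h(w)) for all w in some punctured neighborhood of 0. -/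
open Complex

private lemma near_one_pos_re {z : ℂ} (h : ‖z - 1‖ < 1/2) : 0 < z.re := by
  have h1 : |(z - 1).re| ≤ ‖z - 1‖ := Complex.abs_re_le_norm _
  have h2 : (z - 1).re = z.re - 1 := by simp
  rw [h2] at h1
  have := neg_abs_le (z.re - 1)
  linarith

private lemma near_one_ne_zero {z : ℂ} (h : ‖z - 1‖ < 1/2) : z ≠ 0 := by
  intro h0
  have := near_one_pos_re h
  rw [h0] at this
  simp at this

private lemma near_one_half_le {z : ℂ} (h : ‖z - 1‖ < 1/2) :
    1/2 ≤ ‖z‖ := by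
  have h1 : ‖(1:ℂ)‖ ≤ ‖1 - z‖ + ‖z‖ := by
    simpa using norm_add_le (1 - z) z
  rw [norm_sub_rev] at h1
  simp only [norm_one] at h1
  linarith

private lemma my_log_add {x y : ℂ} (hx : ‖x - 1‖ < 1/2)
    (hy : ‖y - 1‖ < 1/2) :
    Complex.log x + Complex.log y = Complex.log (x * y) := by
  have hx0 : x ≠ 0 := near_one_ne_zero hx
  have hy0 : y ≠ 0 := near_one_ne_zero hy
  have hax : |Complex.arg x| < Real.pi / 2 :=
    Complex.abs_arg_lt_pi_div_two_iff.mpr (Or.inl (near_one_pos_re hx))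
  have hay : |Complex.arg y| < Real.pi / 2 :=
    Complex.abs_arg_lt_pi_div_two_iff.mpr (Or.inl (near_one_pos_re hy))
  rw [eq_comm, Complex.log_mul_eq_add_log_iff hx0 hy0]
  have h1 := abs_lt.mp hax
  have h2 := abs_lt.mp hay
  constructor <;> [linarith [h1.1, h2.1]; linarith [h1.2, h2.2]]

private lemma mmap_pow (n : ℕ) (hn : 1 ≤ n) (A z : ℂ) (h : 1 + A * z ^ n ≠ 0) :
    (mmap n A z) ^ n = z ^ n * (1 + A * z ^ n)⁻¹ := by
  have hn' : (n : ℂ) ≠ 0 := Nat.cast_ne_zero.mpr (by omega)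
  unfold mmap
  rw [mul_pow, ← Complex.exp_nat_mul,
    show (n : ℂ) * (-(1 / (n : ℂ)) * Complex.log (1 + A * z ^ n))
      = -Complex.log (1 + A * z ^ n) by field_simp,
    Complex.exp_neg, Complex.exp_log h]

/-- For every `A`, the map `h = m_{A,n}` solves the compatibility functional equation
`h ∘ L_{F/C} ∘ h ∘ L_{Cβ} = L_{1/C} ∘ h ∘ L_{FCβ} ∘ h` near the origin, whenever
`Fⁿ = ((Cβ)ⁿ - 1)/(βⁿ(Cⁿ - 1))`. -/
theorem stmt_14 (n : ℕ) (hn : 1 ≤ n) (A C β F : ℂ)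
    (hC : C ≠ 0) (hβ : β ≠ 0) (hF : F ≠ 0) (hCn : C ^ n ≠ 1)
    (hFn : F ^ n = ((C * β) ^ n - 1) / (β ^ n * (C ^ n - 1))) :
    ∃ δ : ℝ, 0 < δ ∧ ∀ w : ℂ, 0 < ‖w‖ → ‖w‖ < δ →
      mmap n A (F * C⁻¹ * mmap n A (C * β * w)) =
        C⁻¹ * mmap n A (F * C * β * mmap n A w) := by
  have hn' : (n : ℂ) ≠ 0 := Nat.cast_ne_zero.mpr (by omega)
  -- generic eventual smallness
  have h0 : ∀ (c : ℂ) (ε : ℝ), 0 < ε →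
      ∀ᶠ w : ℂ in nhds 0, ‖c * w ^ n‖ < ε := by
    intro c ε hε
    have hcont : Filter.Tendsto (fun w : ℂ => c * w ^ n) (nhds 0) (nhds 0) := by
      have h1 : Filter.Tendsto (fun w : ℂ => c * w ^ n) (nhds 0) (nhds (c * 0 ^ n)) :=
        ((continuous_const.mul (continuous_pow n)).tendsto 0)
      simpa [zero_pow (show n ≠ 0 by omega)] using h1
    have hball : ∀ᶠ z : ℂ in nhds 0, ‖z‖ < ε := by
      filter_upwards [Metric.ball_mem_nhds (0 : ℂ) hε] with z hz
      simpa [Metric.mem_ball, Complex.dist_eq] using hz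
    exact hcont.eventually hball
  have hev : ∀ᶠ w : ℂ in nhds 0,
      ‖A * (C * β) ^ n * w ^ n‖ < 1/2 ∧
      ‖A * w ^ n‖ < 1/2 ∧
      ‖A * (F * C⁻¹) ^ n * (C * β) ^ n * w ^ n‖ < 1/4 ∧
      ‖A * (F * C * β) ^ n * w ^ n‖ < 1/4 :=
    ((h0 _ _ (by norm_num)).and ((h0 _ _ (by norm_num)).and
      ((h0 _ _ (by norm_num)).and (h0 _ _ (by norm_num)))))
  rw [Metric.eventually_nhds_iff] at hev
  obtain ⟨δ, hδ, hδeq⟩ := hev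
  refine ⟨δ, hδ, fun w _ hwδ => ?_⟩
  obtain ⟨hc1, hc2, hc3, hc4⟩ := hδeq (by simpa [Complex.dist_eq] using hwδ)
  -- algebraic key identity
  have key : (C * β) ^ n + F ^ n * β ^ n = 1 + F ^ n * C ^ n * β ^ n := by
    have hden : β ^ n * (C ^ n - 1) ≠ 0 :=
      mul_ne_zero (pow_ne_zero _ hβ) (sub_ne_zero.mpr hCn)
    have h := hFn
    field_simp at h
    linear_combination -h
  have hCC : C⁻¹ * C = 1 := inv_mul_cancel₀ hC
  have hCCpow : (C⁻¹ * C) ^ n = 1 := by rw [hCC, one_pow]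
  -- first stage values
  set a1 : ℂ := 1 + A * (C * β * w) ^ n with ha1def
  set a2 : ℂ := 1 + A * w ^ n with ha2def
  have ha1 : ‖a1 - 1‖ < 1/2 := by
    have : a1 - 1 = A * (C * β) ^ n * w ^ n := by rw [ha1def, mul_pow]; ring
    rw [this]; exact hc1
  have ha2 : ‖a2 - 1‖ < 1/2 := by
    have : a2 - 1 = A * w ^ n := by rw [ha2def]; ring
    rw [this]; exact hc2
  have ha10 : a1 ≠ 0 := near_one_ne_zero ha1
  have ha20 : a2 ≠ 0 := near_one_ne_zero ha2
  have hm1 : (mmap n A (C * β * w)) ^ n = (C * β * w) ^ n * a1⁻¹ :=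
    mmap_pow n hn A _ ha10
  have hm2 : (mmap n A w) ^ n = w ^ n * a2⁻¹ := mmap_pow n hn A _ ha20
  -- second stage values
  set b1 : ℂ := 1 + A * (F * C⁻¹) ^ n * (C * β * w) ^ n * a1⁻¹ with hb1def
  set b2 : ℂ := 1 + A * (F * C * β) ^ n * w ^ n * a2⁻¹ with hb2def
  have hinvbound : ∀ z : ℂ, ‖z - 1‖ < 1/2 → ‖z⁻¹‖ ≤ 2 := by
    intro z hz
    rw [norm_inv]
    have h1 := near_one_half_le hz
    have h2 : (0:ℝ) < ‖z‖ := lt_of_lt_of_le (by norm_num) h1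
    rw [inv_le_comm₀ h2 (by norm_num)]
    linarith
  have hb1 : ‖b1 - 1‖ < 1/2 := by
    have he : b1 - 1 = (A * (F * C⁻¹) ^ n * (C * β) ^ n * w ^ n) * a1⁻¹ := by
      rw [hb1def, mul_pow]; ring
    rw [he, norm_mul]
    calc ‖A * (F * C⁻¹) ^ n * (C * β) ^ n * w ^ n‖ * ‖a1⁻¹‖
        ≤ ‖A * (F * C⁻¹) ^ n * (C * β) ^ n * w ^ n‖ * 2 := by
          gcongr; exact hinvbound a1 ha1
      _ < 1/2 := by linarith
  have hb2 : ‖b2 - 1‖ < 1/2 := by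
    have he : b2 - 1 = (A * (F * C * β) ^ n * w ^ n) * a2⁻¹ := by
      rw [hb2def]; ring
    rw [he, norm_mul]
    calc ‖A * (F * C * β) ^ n * w ^ n‖ * ‖a2⁻¹‖
        ≤ ‖A * (F * C * β) ^ n * w ^ n‖ * 2 := by
          gcongr; exact hinvbound a2 ha2
      _ < 1/2 := by linarith
  -- arguments of the outer logs
  have hb1arg : 1 + A * (F * C⁻¹ * mmap n A (C * β * w)) ^ n = b1 := by
    rw [mul_pow, hm1, hb1def]; ring
  have hb2arg : 1 + A * (F * C * β * mmap n A w) ^ n = b2 := by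
    rw [mul_pow, hm2, hb2def]; ring
  -- compute each side
  have hL : mmap n A (F * C⁻¹ * mmap n A (C * β * w)) =
      (F * C⁻¹ * (C * β * w)) * Complex.exp (-(1 / (n : ℂ)) * Complex.log (a1 * b1)) := by
    conv_lhs => rw [mmap]
    rw [hb1arg]
    conv_lhs => rw [mmap, ← ha1def]
    rw [show F * C⁻¹ * (C * β * w * Complex.exp (-(1 / (n:ℂ)) * Complex.log a1)) *
          Complex.exp (-(1 / (n:ℂ)) * Complex.log b1)
        = (F * C⁻¹ * (C * β * w)) * Complex.exp (-(1 / (n:ℂ)) * Complex.log a1 +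
            -(1 / (n:ℂ)) * Complex.log b1) by rw [Complex.exp_add]; ring]
    rw [show -(1 / (n:ℂ)) * Complex.log a1 + -(1 / (n:ℂ)) * Complex.log b1
        = -(1 / (n:ℂ)) * (Complex.log a1 + Complex.log b1) by ring,
      my_log_add ha1 hb1]
  have hR : mmap n A (F * C * β * mmap n A w) =
      (F * C * β * w) * Complex.exp (-(1 / (n : ℂ)) * Complex.log (a2 * b2)) := by
    conv_lhs => rw [mmap]
    rw [hb2arg]
    conv_lhs => rw [mmap, ← ha2def]
    rw [show F * C * β * (w * Complex.exp (-(1 / (n:ℂ)) * Complex.log a2)) *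
          Complex.exp (-(1 / (n:ℂ)) * Complex.log b2)
        = (F * C * β * w) * Complex.exp (-(1 / (n:ℂ)) * Complex.log a2 +
            -(1 / (n:ℂ)) * Complex.log b2) by rw [Complex.exp_add]; ring]
    rw [show -(1 / (n:ℂ)) * Complex.log a2 + -(1 / (n:ℂ)) * Complex.log b2
        = -(1 / (n:ℂ)) * (Complex.log a2 + Complex.log b2) by ring,
      my_log_add ha2 hb2]
  have hab : a1 * b1 = a2 * b2 := by
    have e1 : a1 * b1 = a1 + A * (F * C⁻¹) ^ n * (C * β * w) ^ n := by
      rw [hb1def]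
      field_simp
    have e2 : a2 * b2 = a2 + A * (F * C * β) ^ n * w ^ n := by
      rw [hb2def]
      field_simp
    rw [e1, e2, ha1def, ha2def]
    linear_combination (A * w ^ n) * key + (A * F ^ n * β ^ n * w ^ n) * hCCpow
  rw [hL, hR, hab]
  ring
end
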